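/- arXiv:1005.2514 — 14 statements merged into one kernel-verified Lean document; each statement's English description precedes it below -/
import Mathlib

section
/- Let t : ℕ → Fin 2 be the Thue–Morse sequence, where t(n) is the parity of the number of 1s in the binary expansion of n. Then for every n ≥ 1 and every k with 1 ≤ k < 2^n, we have t(2^(n+1) - 1 + k) ≠ t(2^(n+1) - 1 + 2k). -/
open Fin.NatCast

lemma digits_two_cons (m r : ℕ) (hr : r < 2) :
    Nat.digits 2 (2 * m + r) = if 2 * m + r = 0 then [] else r :: Nat.digits 2 m := by
  split
  · next h => rw [h]; simp
  · rw [Nat.digits_def' (by norm_num : 1 < 2) (by omega)]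
    congr 1
    · omega
    · congr 1
      omega

lemma count_one_pow_add (s : ℕ) : ∀ m : ℕ, m < 2 ^ s →
    (Nat.digits 2 (2 ^ s + m)).count 1 = (Nat.digits 2 m).count 1 + 1 := by
  induction s with
  | zero =>
    intro m hm
    interval_cases m
    simp
  | succ s ih =>
    intro m hm
    have hq : m / 2 < 2 ^ s := by
      have := Nat.pow_succ 2 s
      omega
    have hrw : 2 ^ (s + 1) + m = 2 * (2 ^ s + m / 2) + m % 2 := by
      have := Nat.pow_succ 2 s
      omega
    rw [hrw, digits_two_cons _ _ (Nat.mod_lt _ (by norm_num))]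
    rw [if_neg (by positivity)]
    rw [List.count_cons, ih _ hq]
    rcases Nat.eq_zero_or_pos m with h0 | h0
    · subst h0; simp
    · conv_rhs => rw [show m = 2 * (m / 2) + m % 2 by omega,
        digits_two_cons _ _ (Nat.mod_lt _ (by norm_num)), if_neg (by omega)]
      rw [List.count_cons]
      ring

/-- For the Thue–Morse sequence `t` (parity of the number of 1 bits), for every `n ≥ 1` and
`1 ≤ k < 2^n`, we have `t (2^(n+1) - 1 + k) ≠ t (2^(n+1) - 1 + 2k)`. -/
theorem stmt_2 (t : ℕ → Fin 2)
    (ht : ∀ n, t n = ((Nat.digits 2 n).count 1 : Fin 2))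
    (n k : ℕ) (hn : 1 ≤ n) (hk1 : 1 ≤ k) (hk2 : k < 2 ^ n) :
    t (2 ^ (n + 1) - 1 + k) ≠ t (2 ^ (n + 1) - 1 + 2 * k) := by
  have hpow : 2 ^ n < 2 ^ (n + 1) := by
    have := Nat.pow_succ 2 n; omega
  have h1 : 2 ^ (n + 1) - 1 + k = 2 ^ (n + 1) + (k - 1) := by omega
  have h2 : 2 ^ (n + 1) - 1 + 2 * k = 2 ^ (n + 1) + (2 * (k - 1) + 1) := by omega
  rw [ht, ht, h1, h2]
  rw [count_one_pow_add _ _ (by omega), count_one_pow_add _ _ (by omega)]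
  rw [digits_two_cons _ _ (by norm_num), if_neg (by omega), List.count_cons]
  set c := (Nat.digits 2 (k - 1)).count 1 with hc
  simp
end

section
/- Let t : ℕ → Fin 2 be the Thue–Morse sequence. For every k ≥ 1, if m = 2^(⌊log₂(k+1)⌋ + 1) + 1, then t(0) = t(m) = t(2m) = ... = t((k+1)m), i.e., t(i·m) = 0 for all 0 ≤ i ≤ k+1. -/
open Fin.NatCast in
/-- For the Thue–Morse sequence `t`, for every `k ≥ 1`, with
`m = 2^(⌊log₂ (k+1)⌋ + 1) + 1`, we have `t (i * m) = t 0` for all `0 ≤ i ≤ k + 1`. -/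
theorem stmt_3 (t : ℕ → Fin 2)
    (ht : ∀ n, t n = ((Nat.digits 2 n).count 1 : Fin 2))
    (k : ℕ) (hk : 1 ≤ k) (m : ℕ) (hm : m = 2 ^ (Nat.log 2 (k + 1) + 1) + 1) :
    ∀ i ≤ k + 1, t (i * m) = t 0 := by
  intro i hi
  rcases Nat.eq_zero_or_pos i with rfl | hipos
  · simp
  set N := Nat.log 2 (k + 1) + 1 with hN
  have hiN : i < 2 ^ N := lt_of_le_of_lt hi (Nat.lt_pow_succ_log_self (by norm_num) _)
  have hlen : (Nat.digits 2 i).length ≤ N := by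
    rw [Nat.digits_len 2 i (by norm_num) hipos.ne']
    exact Nat.add_le_add_right (Nat.log_mono_right hi) 1
  have key : i * m = i + 2 ^ ((Nat.digits 2 i).length + (N - (Nat.digits 2 i).length)) * i := by
    rw [hm, Nat.add_sub_cancel' hlen]; ring
  have hdig : Nat.digits 2 (i * m)
      = Nat.digits 2 i ++ List.replicate (N - (Nat.digits 2 i).length) 0 ++ Nat.digits 2 i := by
    rw [key, ← Nat.digits_append_zeroes_append_digits (by norm_num) hipos]
  rw [ht, ht, hdig]
  simp only [List.count_append, List.count_replicate]
  norm_num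
  have : ((Nat.digits 2 i).count 1 + (Nat.digits 2 i).count 1 : Fin 2)
      = 2 * ((Nat.digits 2 i).count 1 : Fin 2) := by open Fin.CommRing in ring
  push_cast
  rw [this]
  simp [Fin.ext_iff]
end

section
/- Every suffix of the Thue–Morse word begins in an Abelian k-power for every positive integer k. That is, for every n ≥ 0 and every k ≥ 1, there exists ℓ ≥ 1 such that the k consecutive blocks t(n..n+ℓ), t(n+ℓ..n+2ℓ), ..., t(n+(k-1)ℓ..n+kℓ) of the Thue–Morse sequence are pairwise Abelian equivalent. -/
namespace TM5

def f (m : ℕ) : ℕ := ((Nat.digits 2 m).count 1) % 2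

lemma f_lt_two (m : ℕ) : f m < 2 := Nat.mod_lt _ (by norm_num)

lemma f_zero : f 0 = 0 := by simp [f]

lemma f_two_mul (m : ℕ) : f (2 * m) = f m := by
  rcases Nat.eq_zero_or_pos m with h | h
  · simp [h]
  · unfold f
    rw [Nat.digits_def' (by norm_num : 1 < 2) (by omega : 0 < 2 * m)]
    simp [Nat.mul_div_cancel_left _ (by norm_num : 0 < 2), Nat.mul_mod_right]

lemma f_two_mul_add_one (m : ℕ) : f (2 * m + 1) = (f m + 1) % 2 := by
  unfold f
  rw [Nat.digits_def' (by norm_num : 1 < 2) (by omega : 0 < 2 * m + 1)]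
  have h1 : (2 * m + 1) % 2 = 1 := by omega
  have h2 : (2 * m + 1) / 2 = m := by omega
  rw [h1, h2, List.count_cons]
  simp [Nat.add_mod]

lemma f_key : ∀ (L c d : ℕ), c < 2 ^ L → f (c + d * 2 ^ L) = (f c + f d) % 2 := by
  intro L
  induction L with
  | zero =>
    intro c d hc
    have : c = 0 := by simpa using hc
    subst this
    simp only [pow_zero, mul_one, zero_add, f_zero]
    have := f_lt_two d
    omega
  | succ L ih =>
    intro c d hc
    rcases Nat.even_or_odd c with ⟨c', rfl⟩ | ⟨c', rfl⟩
    · have hc' : c' < 2 ^ L := by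
        have := hc; rw [pow_succ] at this; omega
      have : c' + c' + d * 2 ^ (L + 1) = 2 * (c' + d * 2 ^ L) := by ring
      rw [this, f_two_mul, ih c' d hc', show c' + c' = 2 * c' from by ring, f_two_mul]
    · have hc' : c' < 2 ^ L := by
        have := hc; rw [pow_succ] at this; omega
      have : 2 * c' + 1 + d * 2 ^ (L + 1) = 2 * (c' + d * 2 ^ L) + 1 := by ring
      rw [this, f_two_mul_add_one, ih c' d hc', f_two_mul_add_one]
      omega

lemma f_mul (i j : ℕ) (h : i < 2 ^ j) : f (i * (2 ^ j + 1)) = 0 := by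
  have : i * (2 ^ j + 1) = i + i * 2 ^ j := by ring
  rw [this, f_key j i i h]
  omega

lemma pair_sum (m : ℕ) : f (2 * m) + f (2 * m + 1) = 1 := by
  rw [f_two_mul, f_two_mul_add_one]
  have := f_lt_two m
  omega

lemma S_even (m : ℕ) : ∑ x ∈ Finset.range (2 * m), f x = m := by
  induction m with
  | zero => simp
  | succ m ih =>
    have : 2 * (m + 1) = (2 * m + 1) + 1 := by ring
    rw [this, Finset.sum_range_succ, Finset.sum_range_succ, ih]
    have := pair_sum m
    omega

lemma S_odd (m : ℕ) : ∑ x ∈ Finset.range (2 * m + 1), f x = m + f m := by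
  rw [Finset.sum_range_succ, S_even, f_two_mul]

end TM5

open TM5 in
/-- Every suffix of the Thue–Morse word begins in an Abelian `k`-power for every `k ≥ 1`:
there is `ℓ ≥ 1` such that the `k` consecutive blocks of length `ℓ` starting at position `n`
are pairwise Abelian equivalent (same number of 1s, being binary words of equal length). -/
theorem stmt_5 (t : ℕ → Fin 2)
    (ht : ∀ n, t n = Fin.ofNat 2 ((Nat.digits 2 n).count 1))
    (n k : ℕ) (hk : 1 ≤ k) :
    ∃ ℓ ≥ 1, ∀ i < k, ∀ j < k,
      (∑ x ∈ Finset.Ico (n + i * ℓ) (n + (i + 1) * ℓ), (t x).val) =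
        ∑ x ∈ Finset.Ico (n + j * ℓ) (n + (j + 1) * ℓ), (t x).val := by
  have htf : ∀ x, (t x).val = f x := by
    intro x
    rw [ht x, Fin.val_ofNat]
    rfl
  -- rewrite sums in terms of f
  have hsum : ∀ a b : ℕ, (∑ x ∈ Finset.Ico a b, (t x).val) = ∑ x ∈ Finset.Ico a b, f x := by
    intro a b; exact Finset.sum_congr rfl (fun x _ => htf x)
  rcases Nat.even_or_odd n with ⟨c, rfl⟩ | ⟨c, rfl⟩
  · -- even case: ℓ = 2, every block sums to 1
    refine ⟨2, by norm_num, ?_⟩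
    have hblock : ∀ i : ℕ, (∑ x ∈ Finset.Ico (c + c + i * 2) (c + c + (i + 1) * 2), f x) = 1 := by
      intro i
      have hab : c + c + i * 2 ≤ c + c + (i + 1) * 2 := by omega
      have key := Finset.sum_range_add_sum_Ico f hab
      have h1 : c + c + (i + 1) * 2 = 2 * (c + i + 1) := by ring
      have h2 : c + c + i * 2 = 2 * (c + i) := by ring
      rw [h1, h2, S_even, S_even] at key
      rw [h1, h2]
      omega
    intro i _ j _
    rw [hsum, hsum, hblock, hblock]
  · -- odd case: n = 2c+1, ℓ = 2 * s with s = 2^c * (2^k + 1)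
    set s : ℕ := 2 ^ c * (2 ^ k + 1) with hs
    have hspos : 1 ≤ s := Nat.one_le_iff_ne_zero.mpr (by positivity)
    refine ⟨2 * s, by omega, ?_⟩
    have hf : ∀ i ≤ k, f (c + i * s) = f c := by
      intro i hi
      have h1 : c + i * s = c + (i * (2 ^ k + 1)) * 2 ^ c := by rw [hs]; ring
      rw [h1, f_key c c _ (Nat.lt_two_pow_self (n := c)),
        f_mul i k (lt_of_le_of_lt hi (Nat.lt_two_pow_self (n := k)))]
      have := f_lt_two c
      omega
    have hblock : ∀ i ≤ k - 1,
        (∑ x ∈ Finset.Ico (2 * c + 1 + i * (2 * s)) (2 * c + 1 + (i + 1) * (2 * s)), f x) = s := by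
      intro i hi
      have hab : 2 * c + 1 + i * (2 * s) ≤ 2 * c + 1 + (i + 1) * (2 * s) := by
        nlinarith
      have key := Finset.sum_range_add_sum_Ico f hab
      have h1 : 2 * c + 1 + (i + 1) * (2 * s) = 2 * (c + (i + 1) * s) + 1 := by ring
      have h2 : 2 * c + 1 + i * (2 * s) = 2 * (c + i * s) + 1 := by ring
      rw [h1, h2, S_odd, S_odd, hf (i + 1) (by omega), hf i (by omega)] at key
      have h3 : (i + 1) * s = i * s + s := by ring
      rw [h1, h2]
      omega
    intro i hik j hjk
    rw [hsum, hsum, hblock i (by omega), hblock j (by omega)]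
end

section
/- Let μ be the Thue–Morse morphism 0 ↦ 01, 1 ↦ 10, let z be an infinite binary word and x = μ(z). If an Abelian 3-power with period ℓ occurs in x at position 2n+1 (0-indexed), then ℓ is even, say ℓ = 2k, and z(n) = z(n+k) = z(n+2k). -/
lemma f2val (a : Fin 2) : (1 - a).val = 1 - a.val := by fin_cases a <;> rfl

lemma sumEven (z x : ℕ → Fin 2)
    (hx : ∀ n, x (2 * n) = z n ∧ x (2 * n + 1) = 1 - z n) :
    ∀ b a, (∑ m ∈ Finset.Ico (2*a) (2*a + 2*b), (x m).val) = b := by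
  intro b
  induction b with
  | zero => intro a; simp
  | succ b ih =>
    intro a
    have h1 : 2*a + 2*(b+1) = (2*a + 2*b + 1) + 1 := by ring
    rw [h1, Finset.sum_Ico_succ_top (by omega), Finset.sum_Ico_succ_top (by omega), ih a]
    have hp1 := (hx (a+b)).1
    have hp2 := (hx (a+b)).2
    have e1 : 2*(a+b) = 2*a+2*b := by ring
    have e2 : 2*(a+b)+1 = 2*a+2*b+1 := by ring
    rw [e1] at hp1; rw [e2] at hp2
    rw [hp1, hp2, f2val]
    have : (z (a+b)).val < 2 := (z (a+b)).isLt
    omega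

lemma blockSum (z x : ℕ → Fin 2)
    (hx : ∀ n, x (2 * n) = z n ∧ x (2 * n + 1) = 1 - z n)
    (k : ℕ) (hk : 1 ≤ k) (a : ℕ) :
    (∑ m ∈ Finset.Ico (2*a + 1) (2*a + 1 + 2*k), (x m).val)
      = (1 - z a).val + (k - 1) + (z (a + k)).val := by
  have h1 : 2*a + 1 + 2*k = (2*a + 2*k) + 1 := by ring
  rw [h1, Finset.sum_Ico_succ_top (by omega),
      Finset.sum_eq_sum_Ico_succ_bot (by omega)]
  have hm : ∑ m ∈ Finset.Ico (2*a+1+1) (2*a+2*k), (x m).val = k - 1 := by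
    have e : 2*a+1+1 = 2*(a+1) := by ring
    have e2 : 2*a+2*k = 2*(a+1) + 2*(k-1) := by omega
    rw [e, e2, sumEven z x hx]
  rw [hm, (hx a).2]
  have e3 : 2*a+2*k = 2*(a+k) := by ring
  rw [e3, (hx (a+k)).1]

/-- Let `μ` be the Thue–Morse morphism `0 ↦ 01`, `1 ↦ 10`, and `x = μ(z)`, i.e.
`x (2n) = z n` and `x (2n+1) = 1 - z n`. If an Abelian 3-power of period `ℓ` occurs in `x`
at position `2n + 1`, then `ℓ = 2k` for some `k` and `z n = z (n + k) = z (n + 2k)`. -/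
theorem stmt_6 (z x : ℕ → Fin 2)
    (hx : ∀ n, x (2 * n) = z n ∧ x (2 * n + 1) = 1 - z n)
    (n ℓ : ℕ) (hℓ : 1 ≤ ℓ)
    (hab : ∀ i < 3, ∀ j < 3,
      (∑ m ∈ Finset.Ico (2 * n + 1 + i * ℓ) (2 * n + 1 + (i + 1) * ℓ), (x m).val) =
        ∑ m ∈ Finset.Ico (2 * n + 1 + j * ℓ) (2 * n + 1 + (j + 1) * ℓ), (x m).val) :
    ∃ k, ℓ = 2 * k ∧ z n = z (n + k) ∧ z n = z (n + 2 * k) := by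
  rcases Nat.even_or_odd ℓ with ⟨k, hk⟩ | ⟨k, hk⟩
  · -- even case: ℓ = 2k
    have hk1 : 1 ≤ k := by omega
    refine ⟨k, by omega, ?_⟩
    have h01 := hab 0 (by norm_num) 1 (by norm_num)
    have h12 := hab 1 (by norm_num) 2 (by norm_num)
    have s0 : (∑ m ∈ Finset.Ico (2*n+1+0*ℓ) (2*n+1+(0+1)*ℓ), (x m).val)
        = (1 - z n).val + (k - 1) + (z (n + k)).val := by
      have el : 2*n+1+0*ℓ = 2*n+1 := by omega
      have er : 2*n+1+(0+1)*ℓ = 2*n+1+2*k := by omega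
      rw [el, er]; exact blockSum z x hx k hk1 n
    have s1 : (∑ m ∈ Finset.Ico (2*n+1+1*ℓ) (2*n+1+(1+1)*ℓ), (x m).val)
        = (1 - z (n+k)).val + (k - 1) + (z (n + 2*k)).val := by
      have el : 2*n+1+1*ℓ = 2*(n+k)+1 := by omega
      have er : 2*n+1+(1+1)*ℓ = 2*(n+k)+1+2*k := by omega
      rw [el, er, blockSum z x hx k hk1 (n+k), show n+k+k = n+2*k from by ring]
    have s2 : (∑ m ∈ Finset.Ico (2*n+1+2*ℓ) (2*n+1+(2+1)*ℓ), (x m).val)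
        = (1 - z (n+2*k)).val + (k - 1) + (z (n + 3*k)).val := by
      have el : 2*n+1+2*ℓ = 2*(n+2*k)+1 := by omega
      have er : 2*n+1+(2+1)*ℓ = 2*(n+2*k)+1+2*k := by omega
      rw [el, er, blockSum z x hx k hk1 (n+2*k), show n+2*k+k = n+3*k from by ring]
    rw [s0, s1] at h01
    rw [s1, s2] at h12
    have f0 := f2val (z n)
    have f1 := f2val (z (n+k))
    have f2 := f2val (z (n+2*k))
    have i0 : (z n).val < 2 := (z n).isLt
    have i1 : (z (n+k)).val < 2 := (z (n+k)).isLt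
    have i2 : (z (n+2*k)).val < 2 := (z (n+2*k)).isLt
    have i3 : (z (n+3*k)).val < 2 := (z (n+3*k)).isLt
    constructor
    · exact Fin.ext (by omega)
    · exact Fin.ext (by omega)
  · -- odd case: ℓ = 2k+1, derive contradiction
    exfalso
    have h01 := hab 0 (by norm_num) 1 (by norm_num)
    have h12 := hab 1 (by norm_num) 2 (by norm_num)
    -- sum0 = (1 - z n).val + k
    have s0 : (∑ m ∈ Finset.Ico (2*n+1+0*ℓ) (2*n+1+(0+1)*ℓ), (x m).val)
        = (1 - z n).val + k := by
      have el : 2*n+1+0*ℓ = 2*n+1 := by ring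
      have er : 2*n+1+(0+1)*ℓ = (2*n+1+1) + 2*k + 0 := by omega
      rw [el, er, Finset.sum_eq_sum_Ico_succ_bot (by omega), (hx n).2]
      have e : 2*n+1+1 = 2*(n+1) := by ring
      have e2 : 2*n+1+1+2*k+0 = 2*(n+1)+2*k := by ring
      rw [e2]
      -- the lower bound inside the sum is 2*n+1+1
      rw [show (2*n+1+1 : ℕ) = 2*(n+1) from by ring, sumEven z x hx]
    -- sum1 = k + z(n+2k+1).val
    have s1 : (∑ m ∈ Finset.Ico (2*n+1+1*ℓ) (2*n+1+(1+1)*ℓ), (x m).val)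
        = k + (z (n+2*k+1)).val := by
      have el : 2*n+1+1*ℓ = 2*(n+k+1) := by omega
      have er : 2*n+1+(1+1)*ℓ = (2*(n+k+1)+2*k) + 1 := by omega
      rw [el, er, Finset.sum_Ico_succ_top (by omega), sumEven z x hx]
      have e : 2*(n+k+1)+2*k = 2*(n+2*k+1) := by ring
      rw [e, (hx (n+2*k+1)).1]
    -- sum2 = (1 - z(n+2k+1)).val + k
    have s2 : (∑ m ∈ Finset.Ico (2*n+1+2*ℓ) (2*n+1+(2+1)*ℓ), (x m).val)
        = (1 - z (n+2*k+1)).val + k := by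
      have el : 2*n+1+2*ℓ = 2*(n+2*k+1)+1 := by omega
      have er : 2*n+1+(2+1)*ℓ = (2*(n+2*k+1)+1+1) + 2*k := by omega
      rw [el, er, Finset.sum_eq_sum_Ico_succ_bot (by omega), (hx (n+2*k+1)).2]
      rw [show (2*(n+2*k+1)+1+1 : ℕ) = 2*(n+2*k+2) from by ring, sumEven z x hx]
    rw [s0, s1] at h01
    rw [s1, s2] at h12
    have f0 := f2val (z n)
    have f1 := f2val (z (n+2*k+1))
    have i0 : (z n).val < 2 := (z n).isLt
    have i1 : (z (n+2*k+1)).val < 2 := (z (n+2*k+1)).isLt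
    omega
end

section
/- For every n ≥ 1, if an Abelian 3-power occurs in the Thue–Morse word at position 2^(n+2) - 1 (0-indexed), then its period is at least 2^(n+1). -/
open Fin.NatCast

/-- number of 1-digits in binary -/
def sc (k : ℕ) : ℕ := (Nat.digits 2 k).count 1

lemma sc_even (k : ℕ) : sc (2*k) = sc k := by
  rcases Nat.eq_zero_or_pos k with rfl | hk
  · simp [sc]
  · unfold sc
    rw [Nat.digits_def' (by norm_num : (1:ℕ) < 2) (by omega)]
    simp [Nat.mul_div_cancel_left _ (by norm_num : (0:ℕ) < 2), Nat.mul_mod_right]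

lemma sc_odd (k : ℕ) : sc (2*k+1) = sc k + 1 := by
  unfold sc
  rw [Nat.digits_def' (by norm_num : (1:ℕ) < 2) (by omega)]
  have h1 : (2*k+1) % 2 = 1 := by omega
  have h2 : (2*k+1) / 2 = k := by omega
  rw [h1, h2]
  simp

lemma sc_add_pow : ∀ (k m : ℕ), m < 2^k → sc (2^k + m) = sc m + 1 := by
  intro k
  induction k with
  | zero =>
    intro m hm
    interval_cases m
    simp [sc]
  | succ k ih =>
    intro m hm
    rcases Nat.even_or_odd m with ⟨m', rfl⟩ | ⟨m', rfl⟩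
    · have h : 2^(k+1) + (m'+m') = 2*(2^k + m') := by ring
      have hm' : m' < 2^k := by
        have : (2:ℕ)^(k+1) = 2*2^k := by ring
        omega
      rw [h, sc_even, ih m' hm', show m'+m' = 2*m' from by ring, sc_even]
    · have h : 2^(k+1) + (2*m'+1) = 2*(2^k + m') + 1 := by ring
      have hm' : m' < 2^k := by
        have : (2:ℕ)^(k+1) = 2*2^k := by ring
        omega
      rw [h, sc_odd, ih m' hm', sc_odd]

lemma F_even (k : ℕ) : ∑ m ∈ Finset.range (2*k), sc m % 2 = k := by
  induction k with
  | zero => simp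
  | succ k ih =>
    have h : 2*(k+1) = (2*k+1)+1 := by ring
    rw [h, Finset.sum_range_succ, Finset.sum_range_succ, ih, sc_odd, sc_even]
    omega

lemma F_odd (k : ℕ) : ∑ m ∈ Finset.range (2*k+1), sc m % 2 = k + sc k % 2 := by
  rw [Finset.sum_range_succ, F_even, sc_even]

lemma sum_split (u v : ℕ) (h : u ≤ v) :
    (∑ m ∈ Finset.range u, sc m % 2) + ∑ m ∈ Finset.Ico u v, sc m % 2
      = ∑ m ∈ Finset.range v, sc m % 2 := by
  rw [Finset.range_eq_Ico, Finset.range_eq_Ico]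
  exact Finset.sum_Ico_consecutive (fun m => sc m % 2) (Nat.zero_le u) h

/-- For every `n ≥ 1`, if an Abelian 3-power occurs in the Thue–Morse word at position
`2^(n+2) - 1`, then its period is at least `2^(n+1)`. -/
theorem stmt_7 (t : ℕ → Fin 2)
    (ht : ∀ n, t n = ((Nat.digits 2 n).count 1 : Fin 2))
    (n ℓ : ℕ) (hn : 1 ≤ n) (hℓ : 1 ≤ ℓ)
    (hab : ∀ i < 3, ∀ j < 3,
      (∑ m ∈ Finset.Ico (2 ^ (n + 2) - 1 + i * ℓ) (2 ^ (n + 2) - 1 + (i + 1) * ℓ),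
          (t m).val) =
        ∑ m ∈ Finset.Ico (2 ^ (n + 2) - 1 + j * ℓ) (2 ^ (n + 2) - 1 + (j + 1) * ℓ),
          (t m).val) :
    2 ^ (n + 1) ≤ ℓ := by
  have htv : ∀ m, (t m).val = sc m % 2 := by
    intro m
    rw [ht m, Fin.val_natCast]
    rfl
  have hsum : ∀ u v : ℕ, (∑ m ∈ Finset.Ico u v, (t m).val)
      = ∑ m ∈ Finset.Ico u v, sc m % 2 :=
    fun u v => Finset.sum_congr rfl (fun m _ => htv m)
  have h2 : (2:ℕ)^(n+2) = 2*2^(n+1) := by ring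
  have h2' : (2:ℕ)^(n+1) = 2*2^n := by ring
  have hN : 1 ≤ (2:ℕ)^(n+1) := Nat.one_le_two_pow
  rcases Nat.even_or_odd ℓ with ⟨q, hq⟩ | ⟨q, hq⟩
  · -- ℓ = q + q, even case
    by_contra hcon
    push_neg at hcon
    have hq1 : 1 ≤ q := by omega
    have hqn : q < 2^n := by omega
    have h12 := hab 1 (by norm_num) 2 (by norm_num)
    have h01 := hab 0 (by norm_num) 1 (by norm_num)
    rw [hsum, hsum] at h12 h01
    have A := sum_split (2^(n+2)-1+0*ℓ) (2^(n+2)-1+(0+1)*ℓ) (by omega)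
    have B := sum_split (2^(n+2)-1+1*ℓ) (2^(n+2)-1+(1+1)*ℓ) (by omega)
    have F0 : ∑ m ∈ Finset.range (2^(n+2)-1+0*ℓ), sc m % 2
        = (2^(n+1)-1) + sc (2^(n+1)-1) % 2 := by
      rw [show 2^(n+2)-1+0*ℓ = 2*(2^(n+1)-1)+1 from by omega]
      exact F_odd _
    have F1a : ∑ m ∈ Finset.range (2^(n+2)-1+(0+1)*ℓ), sc m % 2
        = ((2^(n+1)-1)+q) + sc ((2^(n+1)-1)+q) % 2 := by
      rw [show 2^(n+2)-1+(0+1)*ℓ = 2*((2^(n+1)-1)+q)+1 from by omega]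
      exact F_odd _
    have F1b : ∑ m ∈ Finset.range (2^(n+2)-1+1*ℓ), sc m % 2
        = ((2^(n+1)-1)+q) + sc ((2^(n+1)-1)+q) % 2 := by
      rw [show 2^(n+2)-1+1*ℓ = 2*((2^(n+1)-1)+q)+1 from by omega]
      exact F_odd _
    have F2 : ∑ m ∈ Finset.range (2^(n+2)-1+(1+1)*ℓ), sc m % 2
        = ((2^(n+1)-1)+2*q) + sc ((2^(n+1)-1)+2*q) % 2 := by
      rw [show 2^(n+2)-1+(1+1)*ℓ = 2*((2^(n+1)-1)+2*q)+1 from by omega]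
      exact F_odd _
    have hb : sc ((2^(n+1)-1)+q) = sc (q-1) + 1 := by
      rw [show (2^(n+1)-1)+q = 2^(n+1) + (q-1) from by omega]
      exact sc_add_pow (n+1) (q-1) (by omega)
    have hc : sc ((2^(n+1)-1)+2*q) = sc (q-1) + 2 := by
      rw [show (2^(n+1)-1)+2*q = 2^(n+1) + (2*(q-1)+1) from by omega]
      rw [sc_add_pow (n+1) (2*(q-1)+1) (by omega), sc_odd]
    have ha : sc (2^(n+1)-1) % 2 < 2 := Nat.mod_lt _ (by norm_num)
    omega
  · -- ℓ = 2*q+1, odd case: contradiction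
    have h12 := hab 1 (by norm_num) 2 (by norm_num)
    rw [hsum, hsum] at h12
    have A := sum_split (2^(n+2)-1+1*ℓ) (2^(n+2)-1+(1+1)*ℓ) (by omega)
    have B := sum_split (2^(n+2)-1+2*ℓ) (2^(n+2)-1+(2+1)*ℓ) (by omega)
    have F1 : ∑ m ∈ Finset.range (2^(n+2)-1+1*ℓ), sc m % 2 = (2^(n+1)-1)+q+1 := by
      rw [show 2^(n+2)-1+1*ℓ = 2*((2^(n+1)-1)+q+1) from by omega]
      exact F_even _
    have F2a : ∑ m ∈ Finset.range (2^(n+2)-1+(1+1)*ℓ), sc m % 2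
        = ((2^(n+1)-1)+2*q+1) + sc ((2^(n+1)-1)+2*q+1) % 2 := by
      rw [show 2^(n+2)-1+(1+1)*ℓ = 2*((2^(n+1)-1)+2*q+1)+1 from by omega]
      exact F_odd _
    have F2b : ∑ m ∈ Finset.range (2^(n+2)-1+2*ℓ), sc m % 2
        = ((2^(n+1)-1)+2*q+1) + sc ((2^(n+1)-1)+2*q+1) % 2 := by
      rw [show 2^(n+2)-1+2*ℓ = 2*((2^(n+1)-1)+2*q+1)+1 from by omega]
      exact F_odd _
    have F3 : ∑ m ∈ Finset.range (2^(n+2)-1+(2+1)*ℓ), sc m % 2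
        = (2^(n+1)-1)+3*q+2 := by
      rw [show 2^(n+2)-1+(2+1)*ℓ = 2*((2^(n+1)-1)+3*q+2) from by omega]
      exact F_even _
    have he : sc ((2^(n+1)-1)+2*q+1) % 2 < 2 := Nat.mod_lt _ (by norm_num)
    omega
end

section
/- The Thue–Morse word is not everywhere Abelian 3-repetitive: there is no integer N such that every factor of the Thue–Morse word of length N has a prefix that is an Abelian cube. -/
section TM

variable {t : ℕ → Fin 2}
variable (ht : ∀ n, t n = Fin.ofNat 2 ((Nat.digits 2 n).count 1))

include ht

lemma tm_even (n : ℕ) : t (2 * n) = t n := by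
  rcases Nat.eq_zero_or_pos n with rfl | hn
  · norm_num
  · rw [ht (2 * n), ht n]
    have hd : Nat.digits 2 (2 * n) = 0 :: Nat.digits 2 n := by
      rw [Nat.digits_def' (b := 2) (by norm_num) (by omega),
        show 2 * n % 2 = 0 by omega, show 2 * n / 2 = n by omega]
    rw [hd]
    simp

lemma tm_odd (n : ℕ) : t (2 * n + 1) = t n + 1 := by
  rw [ht (2 * n + 1), ht n]
  have hd : Nat.digits 2 (2 * n + 1) = 1 :: Nat.digits 2 n := by
    rw [Nat.digits_def' (b := 2) (by norm_num) (by omega),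
      show (2 * n + 1) % 2 = 1 by omega, show (2 * n + 1) / 2 = n by omega]
  rw [hd, List.count_cons]
  simp
  apply Fin.ext; simp [Fin.val_add]


lemma tm_pow (m : ℕ) : ∀ r < 2 ^ m, t (2 ^ m + r) = t r + 1 := by
  induction m with
  | zero =>
    intro r hr
    interval_cases r
    have := tm_odd ht 0
    simpa using this
  | succ m ih =>
    intro r hr
    rcases Nat.even_or_odd r with ⟨s, hs⟩ | ⟨s, hs⟩
    · have h1 : 2 ^ (m + 1) + r = 2 * (2 ^ m + s) := by rw [hs]; ring
      have h2 : s < 2 ^ m := by have : 2 ^ (m+1) = 2 * 2 ^ m := by ring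
                                omega
      rw [h1, tm_even ht, ih s h2, hs, show s + s = 2 * s by ring, tm_even ht]
    · have h1 : 2 ^ (m + 1) + r = 2 * (2 ^ m + s) + 1 := by rw [hs]; ring
      have h2 : s < 2 ^ m := by have : 2 ^ (m+1) = 2 * 2 ^ m := by ring
                                omega
      rw [h1, tm_odd ht, ih s h2, hs, tm_odd ht]

lemma tm_pair (n : ℕ) : (t (2 * n)).val + (t (2 * n + 1)).val = 1 := by
  rw [tm_even ht, tm_odd ht]
  have : ∀ a : Fin 2, a.val + (a + 1).val = 1 := by decide
  exact this (t n)

lemma tm_S_even (n : ℕ) : ∑ m ∈ Finset.range (2 * n), (t m).val = n := by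
  induction n with
  | zero => simp
  | succ n ih =>
    have h : 2 * (n + 1) = (2 * n + 1) + 1 := by ring
    rw [h, Finset.sum_range_succ, Finset.sum_range_succ, ih]
    have := tm_pair ht n
    omega

lemma tm_S_odd (n : ℕ) : ∑ m ∈ Finset.range (2 * n + 1), (t m).val = n + (t n).val := by
  rw [Finset.sum_range_succ, tm_S_even ht, tm_even ht]

end TM

/-- The Thue–Morse word is not everywhere Abelian 3-repetitive: there is no `N` such that
every length-`N` factor (equivalently, the factor starting at any position `p`) has a prefix
that is an Abelian cube. -/
theorem stmt_8 (t : ℕ → Fin 2)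
    (ht : ∀ n, t n = Fin.ofNat 2 ((Nat.digits 2 n).count 1)) :
    ¬ ∃ N : ℕ, ∀ p : ℕ, ∃ ℓ ≥ 1, 3 * ℓ ≤ N ∧ ∀ i < 3, ∀ j < 3,
      (∑ m ∈ Finset.Ico (p + i * ℓ) (p + (i + 1) * ℓ), (t m).val) =
        ∑ m ∈ Finset.Ico (p + j * ℓ) (p + (j + 1) * ℓ), (t m).val := by
  rintro ⟨N, h⟩
  have hN : N < 2 ^ N := Nat.lt_two_pow_self (n := N)
  obtain ⟨q, hq⟩ : ∃ q, 2 ^ N = q + 1 :=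
    ⟨2 ^ N - 1, by have := Nat.one_le_two_pow (n := N); omega⟩
  set p := 2 * q + 1 with hp
  obtain ⟨ℓ, hℓ1, hℓN, hsum⟩ := h p
  -- prefix-sum gluing
  have key : ∀ a b : ℕ, a ≤ b →
      (∑ m ∈ Finset.range a, (t m).val) + (∑ m ∈ Finset.Ico a b, (t m).val)
        = ∑ m ∈ Finset.range b, (t m).val := by
    intro a b hab
    rw [Finset.range_eq_Ico, Finset.range_eq_Ico]
    exact Finset.sum_Ico_consecutive _ (Nat.zero_le a) hab
  have Tle : ∀ n, (t n).val ≤ 1 := fun n => Nat.lt_succ_iff.mp (t n).isLt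
  have e01 := hsum 0 (by norm_num) 1 (by norm_num)
  have e12 := hsum 1 (by norm_num) 2 (by norm_num)
  have k0 := key (p + 0 * ℓ) (p + 1 * ℓ) (by omega)
  have k1 := key (p + 1 * ℓ) (p + 2 * ℓ) (by omega)
  have k2 := key (p + 2 * ℓ) (p + 3 * ℓ) (by omega)
  rw [show (0:ℕ) + 1 = 1 by norm_num] at e01
  rw [show (1:ℕ) + 1 = 2 by norm_num] at e01 e12
  rw [show (2:ℕ) + 1 = 3 by norm_num] at e12
  rcases Nat.even_or_odd ℓ with ⟨k, hk⟩ | ⟨k, hk⟩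
  · -- ℓ = 2k even: reduce to t(q+k) = t(q+2k), contradiction near 2^N
    have hk1 : 1 ≤ k := by omega
    have S0 : ∑ m ∈ Finset.range (p + 0 * ℓ), (t m).val = q + (t q).val := by
      rw [show p + 0 * ℓ = 2 * q + 1 by omega]; exact tm_S_odd ht q
    have S1 : ∑ m ∈ Finset.range (p + 1 * ℓ), (t m).val = (q + k) + (t (q + k)).val := by
      rw [show p + 1 * ℓ = 2 * (q + k) + 1 by omega]; exact tm_S_odd ht (q + k)
    have S2 : ∑ m ∈ Finset.range (p + 2 * ℓ), (t m).val = (q + 2 * k) + (t (q + 2 * k)).val := by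
      rw [show p + 2 * ℓ = 2 * (q + 2 * k) + 1 by omega]; exact tm_S_odd ht (q + 2 * k)
    rw [S0, S1] at k0
    rw [S1, S2] at k1
    have heq : (t (q + k)).val = (t (q + 2 * k)).val := by
      have := Tle q; have := Tle (q + k); have := Tle (q + 2 * k)
      omega
    -- but t(q+k) = t(k-1)+1 and t(q+2k) = t(k-1)
    have hb1 : k - 1 < 2 ^ N := by omega
    have hb2 : 2 * k - 1 < 2 ^ N := by omega
    have h1 : t (q + k) = t (k - 1) + 1 := by
      rw [show q + k = 2 ^ N + (k - 1) by omega]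
      exact tm_pow ht N (k - 1) hb1
    have h2 : t (q + 2 * k) = t (k - 1) := by
      rw [show q + 2 * k = 2 ^ N + (2 * k - 1) by omega]
      rw [tm_pow ht N (2 * k - 1) hb2,
        show 2 * k - 1 = 2 * (k - 1) + 1 by omega, tm_odd ht]
      have : ∀ a : Fin 2, a + 1 + 1 = a := by decide
      exact this _
    rw [h1, h2] at heq
    have : ∀ a : Fin 2, (a + 1).val ≠ a.val := by decide
    exact this (t (k - 1)) heq
  · -- ℓ = 2k+1 odd: parity contradiction
    have S1 : ∑ m ∈ Finset.range (p + 1 * ℓ), (t m).val = q + k + 1 := by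
      rw [show p + 1 * ℓ = 2 * (q + k + 1) by omega]; exact tm_S_even ht (q + k + 1)
    have S2 : ∑ m ∈ Finset.range (p + 2 * ℓ), (t m).val
        = (q + 2 * k + 1) + (t (q + 2 * k + 1)).val := by
      rw [show p + 2 * ℓ = 2 * (q + 2 * k + 1) + 1 by omega]
      exact tm_S_odd ht (q + 2 * k + 1)
    have S3 : ∑ m ∈ Finset.range (p + 3 * ℓ), (t m).val = q + 3 * k + 2 := by
      rw [show p + 3 * ℓ = 2 * (q + 3 * k + 2) by omega]; exact tm_S_even ht (q + 3 * k + 2)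
    rw [S1, S2] at k1
    rw [S2, S3] at k2
    have := Tle (q + 2 * k + 1)
    omega
end

section
/- Neither 0·TM nor 1·TM has an Abelian cube as a prefix, where TM is the Thue–Morse word. That is, for a ∈ {0,1}, there is no ℓ ≥ 1 such that the three consecutive length-ℓ blocks of the word a·t(0)t(1)t(2)... starting at position 0 are pairwise Abelian equivalent. -/
open Fin.NatCast

def tmc (n : ℕ) : ℕ := (Nat.digits 2 n).count 1

def tmu (n : ℕ) : ℕ := tmc n % 2

def tmT (n : ℕ) : ℕ := ∑ k ∈ Finset.range n, tmu k

lemma tmc_even (n : ℕ) (h : 0 < n) : tmc (2 * n) = tmc n := by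
  unfold tmc
  rw [Nat.digits_def' (by norm_num : 1 < 2) (by omega : 0 < 2 * n)]
  simp [Nat.mul_div_cancel_left, List.count_cons]

lemma tmc_odd (n : ℕ) : tmc (2 * n + 1) = tmc n + 1 := by
  unfold tmc
  rw [Nat.digits_def' (by norm_num : 1 < 2) (by omega : 0 < 2 * n + 1)]
  have h1 : (2 * n + 1) % 2 = 1 := by omega
  have h2 : (2 * n + 1) / 2 = n := by omega
  rw [h1, h2]
  simp [List.count_cons]

lemma tmu_even (n : ℕ) : tmu (2 * n) = tmu n := by
  rcases Nat.eq_zero_or_pos n with rfl | h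
  · rfl
  · unfold tmu; rw [tmc_even n h]

lemma tmu_pair (n : ℕ) : tmu (2 * n) + tmu (2 * n + 1) = 1 := by
  rw [tmu_even]
  unfold tmu
  rw [tmc_odd]
  omega

lemma tmu_le (n : ℕ) : tmu n ≤ 1 := by
  unfold tmu; omega

lemma tmT_succ (n : ℕ) : tmT (n + 1) = tmT n + tmu n := by
  unfold tmT; rw [Finset.sum_range_succ]

lemma tmT_even (n : ℕ) : tmT (2 * n) = n := by
  induction n with
  | zero => rfl
  | succ n ih =>
    have h1 : 2 * (n + 1) = (2 * n + 1) + 1 := by ring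
    rw [h1, tmT_succ, tmT_succ, ih]
    have := tmu_pair n
    omega

/-- Neither `0·TM` nor `1·TM` has an Abelian cube as a prefix: for `a ∈ {0,1}` and `s`
the word `a` followed by the Thue–Morse word, there is no `ℓ ≥ 1` such that the three
consecutive length-`ℓ` blocks of `s` starting at position 0 are pairwise Abelian
equivalent. -/
theorem stmt_9 (t : ℕ → Fin 2)
    (ht : ∀ n, t n = ((Nat.digits 2 n).count 1 : Fin 2))
    (a : Fin 2) (s : ℕ → Fin 2) (hs0 : s 0 = a) (hs : ∀ n, s (n + 1) = t n) :
    ¬ ∃ ℓ ≥ 1, ∀ i < 3, ∀ j < 3,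
      (∑ m ∈ Finset.Ico (i * ℓ) ((i + 1) * ℓ), (s m).val) =
        ∑ m ∈ Finset.Ico (j * ℓ) ((j + 1) * ℓ), (s m).val := by
  rintro ⟨ℓ, hℓ, h⟩
  have e1 := h 0 (by norm_num) 1 (by norm_num)
  have e2 := h 0 (by norm_num) 2 (by norm_num)
  -- prefix sums of s in terms of tmT
  have hS : ∀ n, ∑ m ∈ Finset.range (n + 1), (s m).val = a.val + tmT n := by
    intro n
    rw [Finset.sum_range_succ']
    have hpt : ∀ i, (s (i + 1)).val = tmu i := by
      intro i
      rw [hs i, ht i]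
      simp [tmu, tmc, Fin.val_natCast]
    simp only [hpt, hs0]
    unfold tmT
    omega
  -- rewrite block 0
  have h01 : (∑ m ∈ Finset.Ico (0 * ℓ) ((0 + 1) * ℓ), (s m).val)
      = ∑ m ∈ Finset.range ℓ, (s m).val := by
    rw [Finset.range_eq_Ico]; norm_num
  have hsplit1 : (∑ m ∈ Finset.range ℓ, (s m).val)
      + (∑ m ∈ Finset.Ico (1 * ℓ) ((1 + 1) * ℓ), (s m).val)
      = ∑ m ∈ Finset.range (2 * ℓ), (s m).val := by
    rw [Finset.range_eq_Ico, show (1 : ℕ) * ℓ = ℓ by ring,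
      show ((1 : ℕ) + 1) * ℓ = 2 * ℓ by ring]
    rw [Finset.range_eq_Ico]
    exact Finset.sum_Ico_consecutive (fun m => (s m).val) (m := 0) (n := ℓ) (k := 2 * ℓ) (by omega) (by omega)
  have hsplit2 : (∑ m ∈ Finset.range (2 * ℓ), (s m).val)
      + (∑ m ∈ Finset.Ico (2 * ℓ) ((2 + 1) * ℓ), (s m).val)
      = ∑ m ∈ Finset.range (3 * ℓ), (s m).val := by
    rw [Finset.range_eq_Ico, show ((2 : ℕ) + 1) * ℓ = 3 * ℓ by ring]
    rw [Finset.range_eq_Ico]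
    exact Finset.sum_Ico_consecutive (fun m => (s m).val) (m := 0) (n := 2 * ℓ) (k := 3 * ℓ) (by omega) (by omega)
  rw [h01] at e1 e2
  have hA : (∑ m ∈ Finset.range (2 * ℓ), (s m).val)
      = 2 * ∑ m ∈ Finset.range ℓ, (s m).val := by omega
  have hB : (∑ m ∈ Finset.range (3 * ℓ), (s m).val)
      = 3 * ∑ m ∈ Finset.range ℓ, (s m).val := by omega
  have hav : a.val ≤ 1 := by omega
  rcases Nat.even_or_odd ℓ with ⟨m, hm⟩ | ⟨k, hk⟩
  · -- even case: ℓ = 2k + 2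
    obtain ⟨k, rfl⟩ : ∃ k, ℓ = 2 * k + 2 := ⟨m - 1, by omega⟩
    rw [show 2 * (2 * k + 2) = (4 * k + 3) + 1 by ring,
      show 2 * k + 2 = (2 * k + 1) + 1 by ring] at hA
    rw [hS (4 * k + 3), hS (2 * k + 1)] at hA
    have T1 : tmT (2 * k + 1) = tmT (2 * k) + tmu (2 * k) := tmT_succ _
    have T2 : tmT (4 * k + 3) = tmT (2 * (2 * k + 1)) + tmu (2 * (2 * k + 1)) := by
      rw [show 4 * k + 3 = 2 * (2 * k + 1) + 1 by ring, tmT_succ]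
    rw [tmT_even] at T1 T2
    rw [tmu_even] at T2
    have hp := tmu_pair k
    have hq := tmu_even k
    have hu1 := tmu_le k
    omega
  · -- odd case: ℓ = 2k + 1
    rw [hk] at hB
    rw [show 3 * (2 * k + 1) = (6 * k + 2) + 1 by ring,
      show 2 * k + 1 = (2 * k) + 1 by ring] at hB
    rw [hS (6 * k + 2), hS (2 * k)] at hB
    have T1 : tmT (2 * k) = k := tmT_even k
    have T2 : tmT (6 * k + 2) = 3 * k + 1 := by
      rw [show 6 * k + 2 = 2 * (3 * k + 1) by ring, tmT_even]
    omega
end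

section
/- Let g be the morphism on binary words given by g(0) = 0111110 and g(1) = 01110, and let z be its fixed point beginning with 0. Then no prefix of z is an Abelian square: there is no n ≥ 1 such that the blocks z(0..n) and z(n..2n) are Abelian equivalent. -/
namespace Stmt10X

def gc : Fin 2 → List (Fin 2) := fun a => if a = 0 then [0,1,1,1,1,1,0] else [0,1,1,1,0]
def bc (l : List (Fin 2)) : List (Fin 2) := l.flatMap gc
def zer (l : List (Fin 2)) : ℕ := l.count 0
abbrev St := ℤ × Fin 2 × List (Fin 2)

def step (st : St) (r : ℕ) : St :=
  let E := st.1
  let a := st.2.1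
  let W := st.2.2
  let ap := (gc a).getD r 0
  let zp : ℤ := zer ((gc a).take r)
  let s : ℤ := 2*(r:ℤ) + 2*E
  let back := bc (W.take 2)
  let fwd := bc (W.drop 2)
  let B : ℤ := back.length
  let Full := back ++ fwd
  let zeta : ℤ := if 0 ≤ s then (zer (fwd.take s.toNat) : ℤ)
    else -(zer ((Full.drop (B+s).toNat).take (-s).toNat) : ℤ)
  (2*zp - zeta, ap, (Full.drop (B+s-2).toNat).take 7)

def GoodList : List St := [
  (-3, 0, [0, 0, 1, 1, 1, 0, 0]),
  (-3, 0, [0, 0, 1, 1, 1, 1, 1]),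
  (-3, 0, [0, 1, 1, 1, 1, 1, 0]),
  (-3, 0, [1, 1, 0, 0, 1, 1, 1]),
  (-3, 0, [1, 1, 1, 1, 0, 0, 1]),
  (-3, 1, [0, 1, 1, 1, 0, 0, 1]),
  (-3, 1, [0, 1, 1, 1, 1, 1, 0]),
  (-2, 0, [1, 0, 0, 1, 1, 1, 0]),
  (-2, 0, [1, 0, 0, 1, 1, 1, 1]),
  (-2, 1, [1, 0, 0, 1, 1, 1, 0]),
  (-2, 1, [1, 0, 0, 1, 1, 1, 1]),
  (-1, 0, [0, 0, 1, 1, 1, 0, 0]),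
  (-1, 0, [0, 0, 1, 1, 1, 1, 1]),
  (-1, 0, [0, 1, 1, 1, 0, 0, 1]),
  (-1, 0, [0, 1, 1, 1, 1, 1, 0]),
  (-1, 0, [1, 1, 0, 0, 1, 1, 1]),
  (-1, 0, [1, 1, 1, 1, 0, 0, 1]),
  (-1, 0, [1, 1, 1, 1, 1, 0, 0]),
  (-1, 1, [0, 0, 1, 1, 1, 0, 0]),
  (-1, 1, [0, 0, 1, 1, 1, 1, 1]),
  (-1, 1, [1, 1, 1, 0, 0, 1, 1]),
  (-1, 1, [1, 1, 1, 1, 1, 0, 0]),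
  (1, 0, [0, 0, 1, 1, 1, 1, 1]),
  (1, 0, [0, 1, 1, 1, 0, 0, 1]),
  (1, 0, [1, 1, 0, 0, 1, 1, 1]),
  (1, 0, [1, 1, 1, 0, 0, 1, 1]),
  (1, 0, [1, 1, 1, 1, 0, 0, 1]),
  (1, 0, [1, 1, 1, 1, 1, 0, 0]),
  (1, 1, [0, 1, 1, 1, 0, 0, 1]),
  (1, 1, [0, 1, 1, 1, 1, 1, 0]),
  (1, 1, [1, 1, 0, 0, 1, 1, 1]),
  (1, 1, [1, 1, 1, 1, 0, 0, 1]),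
  (2, 1, [1, 0, 0, 1, 1, 1, 0]),
  (2, 1, [1, 0, 0, 1, 1, 1, 1]),
  (3, 0, [1, 1, 0, 0, 1, 1, 1]),
  (3, 1, [0, 0, 1, 1, 1, 0, 0]),
  (3, 1, [1, 1, 1, 0, 0, 1, 1]),
  (3, 1, [1, 1, 1, 1, 1, 0, 0])
]

lemma nozero : ∀ st ∈ GoodList, st.1 ≠ 0 := by decide

lemma Ebound : ∀ st ∈ GoodList, -3 ≤ st.1 ∧ st.1 ≤ 3 := by decide

lemma Wlen : ∀ st ∈ GoodList, st.2.2.length = 7 := by decide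

lemma closure : ∀ st ∈ GoodList, ∀ r < (gc st.2.1).length, step st r ∈ GoodList := by decide


def w (m : ℕ) : List (Fin 2) := bc^[m] [0]

lemma w_succ (m : ℕ) : w (m+1) = bc (w m) := Function.iterate_succ_apply' bc m [0]

lemma bc_cons (a : Fin 2) (t : List (Fin 2)) : bc (a :: t) = gc a ++ bc t := List.flatMap_cons

lemma bc_append (u v : List (Fin 2)) : bc (u ++ v) = bc u ++ bc v := List.flatMap_append

lemma zer_append (u v : List (Fin 2)) : zer (u ++ v) = zer u + zer v := List.count_append

lemma len_gc (a : Fin 2) : (gc a).length = 5 + 2 * zer [a] := by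
  revert a; decide

lemma zer_gc (a : Fin 2) : zer (gc a) = 2 := by revert a; decide

lemma len_bc (l : List (Fin 2)) : (bc l).length = 5 * l.length + 2 * zer l := by
  induction l with
  | nil => rfl
  | cons a t ih =>
      rw [bc_cons, List.length_append, ih, len_gc]
      have : zer (a :: t) = zer [a] + zer t := zer_append [a] t
      rw [List.length_cons, this]; ring

lemma zer_bc (l : List (Fin 2)) : zer (bc l) = 2 * l.length := by
  induction l with
  | nil => rfl
  | cons a t ih =>
      rw [bc_cons, zer_append, ih, zer_gc, List.length_cons]; ring

lemma one_le_len_w (m : ℕ) : 1 ≤ (w m).length := by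
  induction m with
  | zero => simp [w]
  | succ m ih => rw [w_succ, len_bc]; omega

lemma le_len_w (m : ℕ) : m ≤ (w m).length := by
  induction m with
  | zero => simp [w]
  | succ m ih =>
      have h1 := one_le_len_w m
      rw [w_succ, len_bc]; omega

section Z
variable (z : ℕ → Fin 2)

def pz (n : ℕ) : List (Fin 2) := (List.range n).map z

@[simp] lemma pz_length (n : ℕ) : (pz z n).length = n := by simp [pz]

lemma pz_getElem (n i : ℕ) (h : i < (pz z n).length) : (pz z n)[i] = z i := by
  simp [pz]

lemma pz_prefix {a b : ℕ} (h : a ≤ b) : pz z a = (pz z b).take a := by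
  unfold pz
  rw [← List.map_take, List.take_range, min_eq_left h]

lemma pz_append (a b : ℕ) :
    pz z (a + b) = pz z a ++ (List.range b).map (fun i => z (a + i)) := by
  unfold pz
  rw [List.range_add, List.map_append, List.map_map]
  rfl

variable (hzw : ∀ m : ℕ, ∀ i : ℕ, ∀ h : i < (w m).length, z i = (w m).get ⟨i, h⟩)
include hzw

lemma pz_eq_take {n M : ℕ} (h : n ≤ (w M).length) : pz z n = (w M).take n := by
  apply List.ext_getElem
  · simp [h]
  · intro i h1 h2
    rw [pz_getElem]
    rw [List.getElem_take]
    have hi : i < (w M).length := lt_of_lt_of_le (by simpa using h1) h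
    exact hzw M i hi

lemma pz_bc (m : ℕ) : pz z ((bc (pz z m)).length) = bc (pz z m) := by
  have h1 : pz z m = (w m).take m := pz_eq_take z hzw (le_len_w m)
  have h2 : bc ((w m).take m) ++ bc ((w m).drop m) = w (m+1) := by
    rw [← bc_append, List.take_append_drop, w_succ]
  have h3 : bc (pz z m) = (w (m+1)).take ((bc (pz z m)).length) := by
    conv_lhs => rw [h1]
    rw [← h2, h1]
    exact List.take_left.symm
  have h4 : (bc (pz z m)).length ≤ (w (m+1)).length := by
    conv_rhs => rw [← h2]
    rw [h1, List.length_append]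
    omega
  rw [pz_eq_take z hzw h4, ← h3]


def Lz (m : ℕ) : ℕ := (bc (pz z m)).length

def Qof (k j : ℕ) : List (Fin 2) := bc ((List.range j).map (fun i => z (k + i)))

omit hzw in
lemma Lz_eq (m : ℕ) : Lz z m = 5 * m + 2 * zer (pz z m) := by
  unfold Lz; rw [len_bc, pz_length]

lemma zer_pz_Lz (m : ℕ) : zer (pz z (Lz z m)) = 2 * m := by
  unfold Lz; rw [pz_bc z hzw, zer_bc, pz_length]

lemma pz_Lz_add (k j : ℕ) :
    pz z (Lz z (k + j)) = pz z (Lz z k) ++ Qof z k j := by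
  unfold Lz
  rw [pz_bc z hzw, pz_bc z hzw, pz_append, bc_append]
  rfl

lemma Lz_add (k j : ℕ) : Lz z (k + j) = Lz z k + (Qof z k j).length := by
  have h := congrArg List.length (pz_Lz_add z hzw k j)
  simpa using h

lemma Lz_mono {k k' : ℕ} (h : k ≤ k') : Lz z k ≤ Lz z k' := by
  obtain ⟨j, rfl⟩ := Nat.exists_eq_add_of_le h
  rw [Lz_add z hzw]; omega

lemma z_at (k j t : ℕ) (ht : t < (Qof z k j).length) :
    z (Lz z k + t) = (Qof z k j)[t] := by
  have h1 := pz_Lz_add z hzw k j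
  have h2 : Lz z k + t < Lz z (k + j) := by rw [Lz_add z hzw]; omega
  have h3 : Lz z k + t < (pz z (Lz z (k+j))).length := by simpa using h2
  rw [← pz_getElem z (Lz z (k+j)) (Lz z k + t) h3]
  rw [List.getElem_of_eq h1 h3]
  rw [List.getElem_append_right (by simp)]
  simp

def cnt (x v : ℕ) : ℕ := zer ((pz z (x + v)).drop x)

omit hzw in
lemma zer_pz_add (x v : ℕ) : zer (pz z (x + v)) = zer (pz z x) + cnt z x v := by
  unfold cnt
  conv_lhs => rw [← List.take_append_drop x (pz z (x+v))]
  rw [zer_append, ← pz_prefix z (by omega : x ≤ x + v)]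

lemma cnt_slice (k j u v : ℕ) (h : u + v ≤ (Qof z k j).length) :
    cnt z (Lz z k + u) v = zer (((Qof z k j).drop u).take v) := by
  unfold cnt
  have hle : Lz z k + u + v ≤ Lz z (k + j) := by rw [Lz_add z hzw]; omega
  rw [pz_prefix z hle, pz_Lz_add z hzw k j]
  have e1 : Lz z k + u + v = (pz z (Lz z k)).length + (u + v) := by simp; omega
  rw [e1, List.take_append]
  have e3 : Lz z k + u = (pz z (Lz z k)).length + u := by simp
  rw [e3, List.drop_append]
  rw [List.drop_take]
  congr 2
  simp [List.drop_take]


def Zf (n : ℕ) : ℕ := zer (pz z n)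
def mkE (n : ℕ) : ℤ := 2 * (Zf z n : ℤ) - Zf z (2*n)
def mkW (m : ℕ) : List (Fin 2) := (List.range 7).map (fun i => z (2*m - 2 + i))
def mkSt (m : ℕ) : St := (mkE z m, z m, mkW z m)

omit hzw in
lemma gc_len_bound : ∀ a : Fin 2, 5 ≤ (gc a).length ∧ (gc a).length ≤ 7 := by decide

omit hzw in
lemma step_eq (E : ℤ) (a : Fin 2) (W : List (Fin 2)) (r : ℕ) :
    step (E, a, W) r =
      (2*(zer ((gc a).take r) : ℤ) -
        (if 0 ≤ 2*(r:ℤ)+2*E then (zer ((bc (W.drop 2)).take (2*(r:ℤ)+2*E).toNat) : ℤ)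
         else -(zer (((bc (W.take 2) ++ bc (W.drop 2)).drop (((bc (W.take 2)).length : ℤ)+(2*(r:ℤ)+2*E)).toNat).take (-(2*(r:ℤ)+2*E)).toNat) : ℤ)),
       (gc a).getD r 0,
       ((bc (W.take 2) ++ bc (W.drop 2)).drop (((bc (W.take 2)).length : ℤ)+(2*(r:ℤ)+2*E)-2).toNat).take 7) := rfl


omit hzw in
lemma mkSt_eq (n : ℕ) : mkSt z n = (mkE z n, z n, mkW z n) := rfl

lemma trans (m r : ℕ) (hm : 1 ≤ m) (hE3 : -3 ≤ mkE z m ∧ mkE z m ≤ 3)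
    (hr : r < (gc (z m)).length) :
    mkSt z (Lz z m + r) = step (mkSt z m) r := by
  set a := z m with ha
  set n := Lz z m + r with hn
  set k0 := 2*m - 2 with hk0
  have hk2 : k0 + 2 = 2*m := by omega
  set W := mkW z m with hWdef
  have hW : W = (List.range 7).map (fun i => z (k0 + i)) := rfl
  have hWtake : W.take 2 = (List.range 2).map (fun i => z (k0 + i)) := by
    rw [hW, ← List.map_take, List.take_range]
    norm_num
  set back := bc (W.take 2) with hback
  set fwd := bc (W.drop 2) with hfwd
  have hWsplit : back ++ fwd = Qof z k0 7 := by
    rw [hback, hfwd, ← bc_append, List.take_append_drop, hW]; rfl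
  have hbackQ : back = Qof z k0 2 := by rw [hback, hWtake]; rfl
  set B := back.length with hB
  have hLzB : Lz z (2*m) = Lz z k0 + B := by
    rw [← hk2, Lz_add z hzw k0 2, ← hbackQ]
  have hlenWt : (W.take 2).length = 2 := by rw [hWtake]; simp
  have hBval : B = 10 + 2 * zer (W.take 2) := by rw [hB, hback, len_bc, hlenWt]
  have hzerWt : zer (W.take 2) ≤ 2 :=
    le_trans List.count_le_length (le_of_eq hlenWt)
  have hlenWd : (W.drop 2).length = 5 := by rw [hW]; simp
  have hzerWd : zer (W.drop 2) ≤ 5 :=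
    le_trans List.count_le_length (le_of_eq hlenWd)
  have hfwdlen : fwd.length = 25 + 2 * zer (W.drop 2) := by
    rw [hfwd, len_bc, hlenWd]
  have hQlen : (Qof z k0 7).length = B + fwd.length := by
    rw [← hWsplit]; simp; rfl
  have hr6 : r ≤ 6 := by have := (gc_len_bound a).2; omega
  -- first block: Zf n
  have hQ1 : Qof z m 1 = gc a := by
    simp [Qof, bc, List.range_succ, ha]
  have hcnt0 : cnt z (Lz z m) r = zer ((gc a).take r) := by
    have h := cnt_slice z hzw m 1 0 r (by rw [hQ1]; omega)
    simpa [hQ1] using h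
  have hZn : zer (pz z n) = 2*m + zer ((gc a).take r) := by
    rw [hn, zer_pz_add z (Lz z m) r, zer_pz_Lz z hzw, hcnt0]
  -- letter at n
  have hzn : z n = (gc a).getD r 0 := by
    have ht : r < (Qof z m 1).length := by rw [hQ1]; exact hr
    have h := z_at z hzw m 1 r ht
    rw [hn, h, List.getD_eq_getElem]
    exact List.getElem_of_eq hQ1 ht
  -- integer bookkeeping
  set s : ℤ := 2*(r:ℤ) + 2*mkE z m with hs
  obtain ⟨hE1, hE2⟩ := hE3
  have hsb : -6 ≤ s ∧ s ≤ 18 := by rw [hs]; omega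
  have h2n : (2*n : ℤ) = (Lz z (2*m) : ℤ) + s := by
    have e1 : Lz z m = 5*m + 2*zer (pz z m) := Lz_eq z m
    have e2 : Lz z (2*m) = 5*(2*m) + 2*zer (pz z (2*m)) := Lz_eq z (2*m)
    rw [hn, hs]
    unfold mkE Zf
    push_cast [e1, e2]
    ring
  have hZL2m : zer (pz z (Lz z (2*m))) = 4*m := by
    have := zer_pz_Lz z hzw (2*m); omega
  -- zeros between L(2m) and 2n  (signed), and value of Zf (2n)
  have hZ2n : (zer (pz z (2*n)) : ℤ) = 4*m +
      (if 0 ≤ s then (zer (fwd.take s.toNat) : ℤ)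
       else -(zer (((back ++ fwd).drop ((B:ℤ)+s).toNat).take (-s).toNat) : ℤ)) := by
    by_cases hcase : 0 ≤ s
    · rw [if_pos hcase]
      have hsN : 2*n = Lz z (2*m) + s.toNat := by omega
      have hstoN : s.toNat ≤ fwd.length := by omega
      have hcnt2 : cnt z (Lz z (2*m)) s.toNat = zer (fwd.take s.toNat) := by
        have h := cnt_slice z hzw k0 7 B s.toNat (by omega)
        rw [← hLzB] at h
        rw [h, ← hWsplit, hB, List.drop_left]
      have : zer (pz z (2*n)) = 4*m + zer (fwd.take s.toNat) := by
        rw [hsN, zer_pz_add z _ _, hZL2m, hcnt2]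
      push_cast [this]; ring
    · rw [if_neg hcase]
      set t := (-s).toNat with hts
      have hBs : ((B:ℤ)+s).toNat + t = B := by omega
      have hu : 2*n = Lz z k0 + ((B:ℤ)+s).toNat := by omega
      have hcnt2 : cnt z (2*n) t =
          zer (((back ++ fwd).drop ((B:ℤ)+s).toNat).take t) := by
        have h := cnt_slice z hzw k0 7 (((B:ℤ)+s).toNat) t (by omega)
        rw [← hu] at h
        rw [h, hWsplit]
      have hL2m2n : Lz z (2*m) = 2*n + t := by omega
      have : zer (pz z (2*n)) + zer (((back ++ fwd).drop ((B:ℤ)+s).toNat).take t)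
          = 4*m := by
        rw [← hcnt2, ← zer_pz_add z _ _, ← hL2m2n, hZL2m]
      omega
  -- third component
  set q := ((B:ℤ) + s - 2).toNat with hq
  have hq7 : q + 7 ≤ (Qof z k0 7).length := by omega
  have hq2n : ∀ i, i < 7 → 2*n - 2 + i = Lz z k0 + (q + i) := by
    intro i _
    omega
  have hWn : mkW z n = ((back ++ fwd).drop q).take 7 := by
    apply List.ext_getElem
    · rw [hWsplit]
      simp only [mkW, List.length_map, List.length_range, List.length_take,
        List.length_drop]
      omega
    · intro i h1 h2
      have hi7 : i < 7 := by simpa [mkW] using h1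
      simp only [mkW, List.getElem_map, List.getElem_range]
      rw [hq2n i hi7]
      rw [z_at z hzw k0 7 (q+i) (by omega)]
      rw [List.getElem_take, List.getElem_drop]
      exact List.getElem_of_eq hWsplit.symm (by omega)
  -- assemble
  have hEcomp : mkE z n = 2*(zer ((gc a).take r) : ℤ) -
      (if 0 ≤ s then (zer (fwd.take s.toNat) : ℤ)
       else -(zer (((back ++ fwd).drop ((B:ℤ)+s).toNat).take (-s).toNat) : ℤ)) := by
    unfold mkE Zf
    rw [hZ2n, hZn]
    push_cast
    ring
  rw [mkSt_eq, mkSt_eq, step_eq]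
  rw [hEcomp, hzn, hWn]


omit hzw in
lemma pz_getD (N i : ℕ) (h : i < N) : (pz z N).getD i 0 = z i := by
  rw [List.getD_eq_getElem _ _ (by simpa using h), pz_getElem]

omit hzw in
lemma mkW_eval (m N : ℕ) (hm : 1 ≤ m) (h : 2*m+5 ≤ N) :
    mkW z m = ((pz z N).drop (2*m-2)).take 7 := by
  apply List.ext_getElem
  · simp [mkW]; omega
  · intro i h1 h2
    have hi7 : i < 7 := by simpa [mkW] using h1
    simp only [mkW, List.getElem_map, List.getElem_range]
    rw [List.getElem_take, List.getElem_drop, pz_getElem]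

omit hzw in
lemma mkE_eval (m N : ℕ) (h : 2*m ≤ N) :
    mkE z m = 2*(zer ((pz z N).take m) : ℤ) - zer ((pz z N).take (2*m)) := by
  unfold mkE Zf
  rw [pz_prefix z (by omega : m ≤ N), pz_prefix z (by omega : 2*m ≤ N)]

lemma base (m : ℕ) (h1 : 1 ≤ m) (h6 : m ≤ 6) : mkSt z m ∈ GoodList := by
  have h39 : (39 : ℕ) ≤ (w 2).length := by decide
  have hC : pz z 39 = (w 2).take 39 := pz_eq_take z hzw h39
  have hzm : z m = (pz z 39).getD m 0 := (pz_getD z 39 m (by omega)).symm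
  rw [mkSt_eq, mkE_eval z m 39 (by omega), mkW_eval z m 39 (by omega) (by omega), hzm, hC]
  interval_cases m <;> decide

omit hzw in
lemma Lz1_le : Lz z 1 ≤ 7 := by
  have h := Lz_eq z 1
  have h2 : zer (pz z 1) ≤ 1 := le_trans List.count_le_length (by simp)
  omega

omit hzw in
lemma Lz_lb (k : ℕ) : 5*k ≤ Lz z k := by
  have := Lz_eq z k; omega

lemma Lz_step (k : ℕ) : Lz z (k+1) = Lz z k + (gc (z k)).length := by
  have h := Lz_add z hzw k 1
  have hQ1 : Qof z k 1 = gc (z k) := by simp [Qof, bc, List.range_succ]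
  rw [h, hQ1]

lemma main : ∀ n : ℕ, 1 ≤ n → mkSt z n ∈ GoodList := by
  intro n
  induction n using Nat.strong_induction_on with
  | _ n IH =>
    intro hn
    by_cases h6 : n ≤ 6
    · exact base z hzw n hn h6
    · have h7 : 7 ≤ n := by omega
      set P : ℕ → Prop := fun k => Lz z k ≤ n with hP
      have hP1 : P 1 := le_trans (Lz1_le z) h7
      set m := Nat.findGreatest P n with hmdef
      have hm1 : 1 ≤ m := Nat.le_findGreatest (by omega) hP1
      have hPm : P m := Nat.findGreatest_spec (by omega : 1 ≤ n) hP1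
      have hmn : m < n := by
        have := Lz_lb z m
        have hLm : Lz z m ≤ n := hPm
        omega
      have hnP : ¬ P (m+1) := Nat.findGreatest_is_greatest (n := n) (by omega) (by omega)
      have hLm1 : n < Lz z (m+1) := by
        simpa [hP] using hnP
      have hLm : Lz z m ≤ n := hPm
      set r := n - Lz z m with hrdef
      have hrn : n = Lz z m + r := by omega
      have hr : r < (gc (z m)).length := by
        have := Lz_step z hzw m
        omega
      have hst := IH m hmn hm1
      have hE3 := Ebound _ hst
      rw [hrn, trans z hzw m r hm1 hE3 hr]
      exact closure _ hst r hr

omit hzw in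
lemma sum_zer (k : ℕ) : (∑ i ∈ Finset.range k, (z i).val) + zer (pz z k) = k := by
  induction k with
  | zero => simp [pz, zer]
  | succ k ih =>
      have hp : pz z (k+1) = pz z k ++ [z k] := by
        simp [pz, List.range_succ]
      have h1 : (z k).val + zer [z k] = 1 := by
        have : ∀ a : Fin 2, a.val + zer [a] = 1 := by decide
        exact this (z k)
      rw [Finset.sum_range_succ, hp, zer_append]
      omega

end Z
end Stmt10X


open Stmt10X in
/-- Let `g` be the morphism `0 ↦ 0111110`, `1 ↦ 01110` and `z` its fixed point beginning
with `0` (so every iterate `g^[m] 0` is a prefix of `z`). Then no prefix of `z` is an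
Abelian square: there is no `n ≥ 1` such that `z(0..n)` and `z(n..2n)` have the same
number of 1s. -/
theorem stmt_10 (g : Fin 2 → List (Fin 2))
    (hg0 : g 0 = [0, 1, 1, 1, 1, 1, 0]) (hg1 : g 1 = [0, 1, 1, 1, 0])
    (z : ℕ → Fin 2)
    (hz : ∀ m : ℕ, ∀ i : ℕ, ∀ h : i < ((fun l => l.flatMap g)^[m] [0]).length,
      z i = ((fun l => l.flatMap g)^[m] [0]).get ⟨i, h⟩) :
    ¬ ∃ n ≥ 1,
      (∑ i ∈ Finset.Ico 0 n, (z i).val) = ∑ i ∈ Finset.Ico n (2 * n), (z i).val := by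
  have hgc : g = gc := by
    funext a
    fin_cases a
    · simpa [gc] using hg0
    · simpa [gc] using hg1
  subst hgc
  have hzw : ∀ m : ℕ, ∀ i : ℕ, ∀ h : i < (w m).length,
      z i = (w m).get ⟨i, h⟩ := hz
  rintro ⟨n, hn1, hsum⟩
  have hst := main z hzw n hn1
  have hne := nozero _ hst
  apply hne
  show mkE z n = 0
  have h1 := sum_zer z n
  have h2 := sum_zer z (2*n)
  have hco : (∑ i ∈ Finset.Ico 0 n, (z i).val) + (∑ i ∈ Finset.Ico n (2*n), (z i).val)
      = ∑ i ∈ Finset.Ico 0 (2*n), (z i).val :=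
    Finset.sum_Ico_consecutive _ (by omega) (by omega)
  simp only [← Finset.range_eq_Ico] at hco hsum
  unfold mkE Zf
  omega
end

section
/- Let g be the morphism 0 ↦ 0111110, 1 ↦ 01110 and z its fixed point starting with 0. If uv is a prefix of z with u and v Abelian equivalent and nonempty, then there exist Abelian equivalent words w₁, w₂ with u = g(w₁), v = g(w₂), and w₁w₂ a prefix of z. -/
section Aux

variable (g : Fin 2 → List (Fin 2))
    (hg0 : g 0 = [0, 1, 1, 1, 1, 1, 0]) (hg1 : g 1 = [0, 1, 1, 1, 0])

lemma aux_fin2 : ∀ c : Fin 2, c = 0 ∨ c = 1 := by decide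

lemma aux_count_fin2 (w : List (Fin 2)) : w.count 0 + w.count 1 = w.length := by
  induction w with
  | nil => simp
  | cons c w ih =>
    rcases aux_fin2 c with rfl | rfl <;> simp [List.count_cons] at ih ⊢ <;> omega

include hg0 hg1 in
lemma aux_count0_bind (w : List (Fin 2)) : (w.flatMap g).count 0 = 2 * w.length := by
  induction w with
  | nil => simp
  | cons c w ih =>
    rw [List.flatMap_cons, List.count_append, ih]
    rcases aux_fin2 c with rfl | rfl <;> simp [hg0, hg1] <;> ring

include hg0 hg1 in
lemma aux_count1_bind (w : List (Fin 2)) :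
    (w.flatMap g).count 1 = 3 * w.length + 2 * w.count 0 := by
  induction w with
  | nil => simp
  | cons c w ih =>
    rw [List.flatMap_cons, List.count_append, ih]
    rcases aux_fin2 c with rfl | rfl <;> simp [hg0, hg1, List.count_cons] <;> ring

include hg0 hg1 in
lemma aux_len_bind (w : List (Fin 2)) :
    (w.flatMap g).length = 5 * w.length + 2 * w.count 0 := by
  have h0 := aux_count0_bind g hg0 hg1 w
  have h1 := aux_count1_bind g hg0 hg1 w
  have h2 := aux_count_fin2 (w.flatMap g)
  omega

include hg0 hg1 in
lemma aux_proper_prefix (c : Fin 2) (q : List (Fin 2)) (h : q <+: g c) (hne : q ≠ [])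
    (hne2 : q ≠ g c) : q.count 0 = 1 := by
  rcases aux_fin2 c with rfl | rfl
  · rw [hg0] at h hne2
    have h' : q ∈ ([0, 1, 1, 1, 1, 1, 0] : List (Fin 2)).inits := (List.mem_inits _ _).mpr h
    have hin : ([0, 1, 1, 1, 1, 1, 0] : List (Fin 2)).inits =
        [[], [0], [0,1], [0,1,1], [0,1,1,1], [0,1,1,1,1], [0,1,1,1,1,1],
          [0,1,1,1,1,1,0]] := by decide
    rw [hin] at h'
    simp only [List.mem_cons, List.not_mem_nil, or_false] at h'
    rcases h' with rfl|rfl|rfl|rfl|rfl|rfl|rfl|rfl <;>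
      first | rfl | (exact absurd rfl hne) | (exact absurd rfl hne2) | decide
  · rw [hg1] at h hne2
    have h' : q ∈ ([0, 1, 1, 1, 0] : List (Fin 2)).inits := (List.mem_inits _ _).mpr h
    have hin : ([0, 1, 1, 1, 0] : List (Fin 2)).inits =
        [[], [0], [0,1], [0,1,1], [0,1,1,1], [0,1,1,1,0]] := by decide
    rw [hin] at h'
    simp only [List.mem_cons, List.not_mem_nil, or_false] at h'
    rcases h' with rfl|rfl|rfl|rfl|rfl|rfl <;>
      first | rfl | (exact absurd rfl hne) | (exact absurd rfl hne2) | decide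

include hg0 hg1 in
lemma aux_desub : ∀ (W s : List (Fin 2)), s <+: W.flatMap g →
    ∃ w q, w <+: W ∧ s = w.flatMap g ++ q ∧ (q = [] ∨ q.count 0 = 1) := by
  intro W
  induction W with
  | nil =>
    intro s hs
    simp at hs
    exact ⟨[], [], by simp, by simp [hs], Or.inl rfl⟩
  | cons c W ih =>
    intro s hs
    rw [List.flatMap_cons] at hs
    by_cases hc : g c <+: s
    · obtain ⟨s', rfl⟩ := hc
      rw [List.prefix_append_right_inj] at hs
      obtain ⟨w, q, h1, h2, h3⟩ := ih s' hs
      exact ⟨c :: w, q, List.cons_prefix_cons.mpr ⟨rfl, h1⟩,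
        by rw [List.flatMap_cons, h2, List.append_assoc], h3⟩
    · have hsc : s <+: g c := by
        rcases List.prefix_or_prefix_of_prefix hs (List.prefix_append _ _) with h | h
        · exact h
        · exact absurd h hc
      refine ⟨[], s, List.nil_prefix, by simp, ?_⟩
      rcases eq_or_ne s [] with rfl | hne
      · exact Or.inl rfl
      · have hne2 : s ≠ g c := fun h => hc (h ▸ List.prefix_refl _)
        exact Or.inr (aux_proper_prefix g hg0 hg1 c s hsc hne hne2)

lemma aux_prefix_of_agree (l L : List (Fin 2)) (h : l.length ≤ L.length)
    (hag : ∀ i (hi : i < l.length), l.get ⟨i, hi⟩ = L.get ⟨i, lt_of_lt_of_le hi h⟩) :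
    l <+: L := by
  rw [List.prefix_iff_eq_take]
  apply List.ext_get
  · rw [List.length_take]; omega
  · intro i h1 h2
    rw [List.get_eq_getElem, List.get_eq_getElem, List.getElem_take]
    exact hag i h1

end Aux

/-- Let `g` be `0 ↦ 0111110`, `1 ↦ 01110` and `z` its fixed point starting with `0`.
If `u ++ v` is a prefix of `z` with `u, v` nonempty and Abelian equivalent, then there are
Abelian equivalent words `w₁, w₂` with `u = g(w₁)`, `v = g(w₂)`, and `w₁ ++ w₂` a prefix
of `z`. -/
theorem stmt_11 (g : Fin 2 → List (Fin 2))
    (hg0 : g 0 = [0, 1, 1, 1, 1, 1, 0]) (hg1 : g 1 = [0, 1, 1, 1, 0])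
    (z : ℕ → Fin 2)
    (hz : ∀ m : ℕ, ∀ i : ℕ, ∀ h : i < ((fun l => l.flatMap g)^[m] [0]).length,
      z i = ((fun l => l.flatMap g)^[m] [0]).get ⟨i, h⟩)
    (u v : List (Fin 2)) (hu : u ≠ []) (hv : v ≠ [])
    (huv : ∀ c : Fin 2, u.count c = v.count c)
    (hpre : ∀ i : ℕ, ∀ h : i < (u ++ v).length, (u ++ v).get ⟨i, h⟩ = z i) :
    ∃ w₁ w₂ : List (Fin 2), (∀ c : Fin 2, w₁.count c = w₂.count c) ∧
      u = w₁.flatMap g ∧ v = w₂.flatMap g ∧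
      ∀ i : ℕ, ∀ h : i < (w₁ ++ w₂).length, (w₁ ++ w₂).get ⟨i, h⟩ = z i := by
  set P : ℕ → List (Fin 2) := fun m => (fun l => l.flatMap g)^[m] [0] with hP
  have hPsucc : ∀ m, P (m + 1) = (P m).flatMap g := fun m =>
    Function.iterate_succ_apply' (fun l => l.flatMap g) m [0]
  have hPlen : ∀ m, m + 1 ≤ (P m).length := by
    intro m
    induction m with
    | zero => simp [hP]
    | succ n ihn =>
      rw [hPsucc, aux_len_bind g hg0 hg1]
      omega
  -- u ++ v is a prefix of P (n+1)
  set n := (u ++ v).length with hn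
  have hnlen : (u ++ v).length ≤ (P (n + 1)).length := le_trans (by omega) (hPlen (n + 1))
  have hpref : u ++ v <+: P (n + 1) :=
    aux_prefix_of_agree _ _ hnlen (fun i hi => by rw [hpre i hi, hz (n + 1) i])
  rw [hPsucc] at hpref
  obtain ⟨W, q, hW, heq, hq⟩ := aux_desub g hg0 hg1 _ _ hpref
  -- q must be empty
  have hc0 : (u ++ v).count 0 = 2 * u.count 0 := by
    rw [List.count_append, huv 0]; ring
  have hc0' : (u ++ v).count 0 = 2 * W.length + q.count 0 := by
    rw [heq, List.count_append, aux_count0_bind g hg0 hg1]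
  have hqnil : q = [] := by
    rcases hq with h | h
    · exact h
    · omega
  subst hqnil
  rw [List.append_nil] at heq
  simp only [List.count_nil, add_zero] at hc0'
  -- desubstitute u
  have hupre : u <+: W.flatMap g := ⟨v, heq⟩
  obtain ⟨w₁, q₁, hw₁, hequ, hq₁⟩ := aux_desub g hg0 hg1 _ _ hupre
  -- lengths of u and v are equal
  have hlu : u.length = v.length := by
    have h1 := aux_count_fin2 u
    have h2 := aux_count_fin2 v
    rw [huv 0, huv 1] at h1
    omega
  have hlapp : (u ++ v).length = u.length + v.length := List.length_append (as := u) (bs := v)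
  have hq₁nil : q₁ = [] := by
    rcases hq₁ with h | h
    · exact h
    · exfalso
      have hcu : u.count 0 = 2 * w₁.length + 1 := by
        rw [hequ, List.count_append, aux_count0_bind g hg0 hg1, h]
      have hlenW : (u ++ v).length = 5 * W.length + 2 * W.count 0 := by
        rw [heq, aux_len_bind g hg0 hg1]
      omega
  subst hq₁nil
  rw [List.append_nil] at hequ
  obtain ⟨w₂, rfl⟩ := hw₁
  have hequv : v = w₂.flatMap g := by
    rw [List.flatMap_append, ← hequ] at heq
    exact List.append_cancel_left heq
  -- count relations
  have hcu0 : u.count 0 = 2 * w₁.length := by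
    rw [hequ, aux_count0_bind g hg0 hg1]
  have hcv0 : v.count 0 = 2 * w₂.length := by
    rw [hequv, aux_count0_bind g hg0 hg1]
  have hcu1 : u.count 1 = 3 * w₁.length + 2 * w₁.count 0 := by
    rw [hequ, aux_count1_bind g hg0 hg1]
  have hcv1 : v.count 1 = 3 * w₂.length + 2 * w₂.count 0 := by
    rw [hequv, aux_count1_bind g hg0 hg1]
  have h0 := huv 0
  have h1 := huv 1
  have hlw : w₁.length = w₂.length := by omega
  have hw0 : w₁.count 0 = w₂.count 0 := by omega
  have hw1 : w₁.count 1 = w₂.count 1 := by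
    have a := aux_count_fin2 w₁
    have b := aux_count_fin2 w₂
    omega
  refine ⟨w₁, w₂, ?_, hequ, hequv, ?_⟩
  · intro c
    rcases aux_fin2 c with rfl | rfl
    · exact hw0
    · exact hw1
  · intro i h
    have hlen : (w₁ ++ w₂).length ≤ (P n).length := hW.length_le
    have hi : i < (P n).length := lt_of_lt_of_le h hlen
    rw [hz n i hi]
    simp only [List.get_eq_getElem]
    exact hW.getElem h
end

section
/- An infinite word over a finite alphabet has bounded Abelian complexity if and only if it is C-balanced for some C > 0. -/
/-- Discrete intermediate value theorem for 1-Lipschitz integer sequences,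
increasing direction. -/
lemma ivt_core (f : ℕ → ℤ) (hf : ∀ r : ℕ, |f (r + 1) - f r| ≤ 1) :
    ∀ (d p : ℕ) (k : ℤ), f p ≤ k → k ≤ f (p + d) → ∃ r, f r = k := by
  intro d
  induction d with
  | zero =>
    intro p k h1 h2
    exact ⟨p, le_antisymm h1 (by simpa using h2)⟩
  | succ d ih =>
    intro p k h1 h2
    by_cases h : k ≤ f (p + d)
    · exact ih p k h1 h
    · refine ⟨p + d + 1, ?_⟩
      have h3 := hf (p + d)
      rw [abs_le] at h3
      have h4 : p + (d + 1) = p + d + 1 := by omega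
      rw [h4] at h2
      omega

/-- Discrete intermediate value theorem: indices unordered, values ordered. -/
lemma ivt_core2 (f : ℕ → ℤ) (hf : ∀ r : ℕ, |f (r + 1) - f r| ≤ 1)
    (p q : ℕ) (k : ℤ) (h1 : f p ≤ k) (h2 : k ≤ f q) : ∃ r, f r = k := by
  rcases le_total p q with hpq | hpq
  · exact ivt_core f hf (q - p) p k h1 (by rwa [Nat.add_sub_cancel' hpq])
  · have hf' : ∀ r : ℕ, |(-f ·) (r + 1) - (-f ·) r| ≤ 1 := by
      intro r
      have e : (-f ·) (r + 1) - (-f ·) r = -(f (r + 1) - f r) := by simp; ring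
      rw [e, abs_neg]
      exact hf r
    obtain ⟨r, hr⟩ := ivt_core (-f ·) hf' (p - q) q (-k) (by simpa using h2)
      (by rw [Nat.add_sub_cancel' hpq]; simpa using h1)
    exact ⟨r, by omega⟩

/-- An infinite word over a finite alphabet has bounded Abelian complexity if and only if
it is `C`-balanced for some `C > 0`. -/
theorem stmt_15 {A : Type*} [Fintype A] [DecidableEq A] (x : ℕ → A) :
    (∃ C : ℕ, ∀ n : ℕ, ∃ S : Finset (A → ℕ), S.card ≤ C ∧
        ∀ p : ℕ, (fun b => (List.ofFn fun j : Fin n => x (p + j)).count b) ∈ S) ↔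
      ∃ C : ℕ, 0 < C ∧ ∀ n p q : ℕ, ∀ b : A,
        |((List.ofFn fun j : Fin n => x (p + j)).count b : ℤ) -
          ((List.ofFn fun j : Fin n => x (q + j)).count b : ℤ)| ≤ (C : ℤ) := by
  constructor
  · rintro ⟨C, hC⟩
    refine ⟨C + 1, Nat.succ_pos _, fun n p q b => ?_⟩
    obtain ⟨S, hScard, hSmem⟩ := hC n
    -- counts in the window starting at r
    set c : ℕ → ℤ := fun r => ((List.ofFn fun j : Fin n => x (r + j)).count b : ℤ) with hc
    -- prefix counts
    set F : ℕ → ℤ := fun m => ((List.ofFn fun j : Fin m => x j).count b : ℤ) with hFdef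
    have hF : ∀ r : ℕ, F (r + n) = F r + c r := by
      intro r
      have := List.ofFn_add (f := fun j : Fin (r + n) => x j)
      simp only [hFdef, hc]
      rw [this, List.count_append]
      push_cast
      congr 1
    have hF1 : ∀ m : ℕ, F (m + 1) = F m + (if x m = b then 1 else 0) := by
      intro m
      simp only [hFdef]
      rw [List.ofFn_succ' (fun j : Fin (m + 1) => x j), List.concat_eq_append,
        List.count_append]
      push_cast
      by_cases h : x m = b <;> simp [h, Fin.last, List.count_cons]
    have hstep : ∀ r : ℕ, |c (r + 1) - c r| ≤ 1 := by
      intro r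
      have e1 : c r = F (r + n) - F r := by rw [hF r]; ring
      have e2 : c (r + 1) = F (r + 1 + n) - F (r + 1) := by rw [hF (r + 1)]; ring
      have e3 := hF1 r
      have e4 : F (r + n + 1) = F (r + n) + (if x (r + n) = b then 1 else 0) := hF1 (r + n)
      have e5 : r + 1 + n = r + n + 1 := by omega
      rw [e1, e2, e5, e4, e3]
      rcases ite_eq_or_eq ((x (r+n)) = b) (1:ℤ) 0 with h | h <;>
        rcases ite_eq_or_eq ((x r) = b) (1:ℤ) 0 with h' | h' <;>
        rw [h, h'] <;> simp
    -- Now use the IVT and the cardinality bound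
    have hmem : ∀ r : ℕ, (fun b' => (List.ofFn fun j : Fin n => x (r + j)).count b') ∈ S :=
      hSmem
    -- every integer between c p and c q is attained
    have key : ∀ k : ℤ, ∃ r : ℕ, (min (c p) (c q) ≤ k ∧ k ≤ max (c p) (c q)) → c r = k := by
      intro k
      by_cases hk : min (c p) (c q) ≤ k ∧ k ≤ max (c p) (c q)
      · obtain ⟨h1, h2⟩ := hk
        rcases le_total (c p) (c q) with h | h
        · obtain ⟨r, hr⟩ := ivt_core2 c hstep p q k
            (by rw [min_eq_left h] at h1; exact h1) (by rw [max_eq_right h] at h2; exact h2)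
          exact ⟨r, fun _ => hr⟩
        · obtain ⟨r, hr⟩ := ivt_core2 c hstep q p k
            (by rw [min_eq_right h] at h1; exact h1) (by rw [max_eq_left h] at h2; exact h2)
          exact ⟨r, fun _ => hr⟩
      · exact ⟨0, fun h => absurd h hk⟩
    choose g hg using key
    have hinj : Set.InjOn (fun k : ℤ => fun b' => (List.ofFn fun j : Fin n => x (g k + j)).count b')
        ↑(Finset.Icc (min (c p) (c q)) (max (c p) (c q))) := by
      intro k1 hk1 k2 hk2 heq
      simp only [Finset.coe_Icc, Set.mem_Icc] at hk1 hk2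
      have e1 : c (g k1) = k1 := hg k1 hk1
      have e2 : c (g k2) = k2 := hg k2 hk2
      have hb : (List.ofFn fun j : Fin n => x (g k1 + j)).count b =
          (List.ofFn fun j : Fin n => x (g k2 + j)).count b := congrFun heq b
      simp only [hc] at e1 e2
      omega
    have hcard : (Finset.Icc (min (c p) (c q)) (max (c p) (c q))).card ≤ S.card := by
      apply Finset.card_le_card_of_injOn _ _ hinj
      intro k hk
      exact hmem (g k)
    rw [Int.card_Icc] at hcard
    have hmm : min (c p) (c q) ≤ max (c p) (c q) := min_le_max
    have htn : (max (c p) (c q) + 1 - min (c p) (c q)).toNat =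
        max (c p) (c q) + 1 - min (c p) (c q) := Int.toNat_of_nonneg (by omega)
    have : max (c p) (c q) + 1 - min (c p) (c q) ≤ (C : ℤ) := by
      have := hScard
      omega
    have habs : |c p - c q| ≤ max (c p) (c q) - min (c p) (c q) := by
      rcases le_total (c p) (c q) with h | h
      · rw [min_eq_left h, max_eq_right h, abs_of_nonpos (by omega)]; omega
      · rw [min_eq_right h, max_eq_left h, abs_of_nonneg (by omega)]
    have hgoal : |c p - c q| ≤ (C : ℤ) := by omega
    simp only [hc] at hgoal
    push_cast
    omega
  · rintro ⟨C, _, hbal⟩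
    refine ⟨(2 * C + 1) ^ Fintype.card A, fun n => ?_⟩
    set v0 : A → ℕ := fun b => (List.ofFn fun j : Fin n => x (0 + j)).count b with hv0
    refine ⟨Fintype.piFinset fun b => Finset.Icc (v0 b - C) (v0 b + C), ?_, ?_⟩
    · rw [Fintype.card_piFinset]
      calc ∏ b : A, (Finset.Icc (v0 b - C) (v0 b + C)).card
          ≤ ∏ _b : A, (2 * C + 1) := by
            apply Finset.prod_le_prod' -- maybe wrong name
            intro b _
            rw [Nat.card_Icc]
            omega
        _ = (2 * C + 1) ^ Fintype.card A := by
            rw [Finset.prod_const, Finset.card_univ]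
    · intro p
      rw [Fintype.mem_piFinset]
      intro b
      rw [Finset.mem_Icc]
      have := hbal n p 0 b
      rw [abs_le] at this
      simp only [hv0]
      omega
end

section
/- Let f be the morphism 0 ↦ 00011, 1 ↦ 01100. If w is an infinite binary word such that f(w) has a prefix of the form 0001·u·v with u, v nonempty and Abelian equivalent, then w has a prefix of the form 0x0y0 with |x| = |y|. -/
private lemma fin2cases (c : Fin 2) : c = 0 ∨ c = 1 := by fin_cases c <;> simp

private lemma arith_split (p q : ℕ) (hp : p < 5) (hq : q < 5) :
    (p = 0 ∨ p = 1 ∨ p = 2 ∨ p = 3 ∨ p = 4) ∧ (q = 0 ∨ q = 1 ∨ q = 2 ∨ q = 3 ∨ q = 4) := by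
  omega

private lemma arith00 (c N1 N2 a p b q : ℕ) (h1 : N1 = 2*a + p/4) (h2 : N2 = 2*b + q/4)
    (hk : 2*N1 = N2+1) (ha : a = c/5) (hp : p = c%5) (hb : b = (2*c-4)/5)
    (hq : q = (2*c-4)%5) (hc : 5 ≤ c) : b = 2*a ∧ 1 ≤ a := by
  obtain ⟨hps, hqs⟩ := arith_split p q (by omega) (by omega)
  rcases hps with h|h|h|h|h <;> rcases hqs with h'|h'|h'|h'|h' <;> omega

private lemma arith01 (c N1 N2 a p b q : ℕ) (h1 : N1 = 2*a + p/4) (h2 : N2 = 2*b + 2*q/3)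
    (hk : 2*N1 = N2+1) (ha : a = c/5) (hp : p = c%5) (hb : b = (2*c-4)/5)
    (hq : q = (2*c-4)%5) (hc : 5 ≤ c) : False := by
  obtain ⟨hps, hqs⟩ := arith_split p q (by omega) (by omega)
  rcases hps with h|h|h|h|h <;> rcases hqs with h'|h'|h'|h'|h' <;> omega

private lemma arith10 (c N1 N2 a p b q : ℕ) (h1 : N1 = 2*a + 2*p/3) (h2 : N2 = 2*b + q/4)
    (hk : 2*N1 = N2+1) (ha : a = c/5) (hp : p = c%5) (hb : b = (2*c-4)/5)
    (hq : q = (2*c-4)%5) (hc : 5 ≤ c) : False := by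
  obtain ⟨hps, hqs⟩ := arith_split p q (by omega) (by omega)
  rcases hps with h|h|h|h|h <;> rcases hqs with h'|h'|h'|h'|h' <;> omega

private lemma arith11 (c N1 N2 a p b q : ℕ) (h1 : N1 = 2*a + 2*p/3) (h2 : N2 = 2*b + 2*q/3)
    (hk : 2*N1 = N2+1) (ha : a = c/5) (hp : p = c%5) (hb : b = (2*c-4)/5)
    (hq : q = (2*c-4)%5) (hc : 5 ≤ c) : False := by
  obtain ⟨hps, hqs⟩ := arith_split p q (by omega) (by omega)
  rcases hps with h|h|h|h|h <;> rcases hqs with h'|h'|h'|h'|h' <;> omega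

private lemma range'_split (s m n k : ℕ) (h : k = m + n) :
    List.range' s k = List.range' s m ++ List.range' (s + m) n := by
  subst h
  have := (List.range'_append : List.range' s m 1 ++ List.range' (s + 1 * m) n 1 = List.range' s (m + n) 1)
  simp only [one_mul] at this
  exact this.symm

private lemma count01 (l : List (Fin 2)) : l.count 0 + l.count 1 = l.length := by
  induction l with
  | nil => simp
  | cons a l ih => fin_cases a <;> simp [List.count_cons] <;> omega

set_option maxHeartbeats 2000000 in
/-- Let `f` be the 5-uniform morphism `0 ↦ 00011`, `1 ↦ 01100`, and let `x = f(w)`.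
If `x` has a prefix `0001 ++ u ++ v` with `u, v` nonempty and Abelian equivalent, then
`w` has a prefix of the form `0 ++ x' ++ 0 ++ y' ++ 0` with `|x'| = |y'|`. -/
theorem stmt_16 (f : Fin 2 → List (Fin 2))
    (hf0 : f 0 = [0, 0, 0, 1, 1]) (hf1 : f 1 = [0, 1, 1, 0, 0])
    (w : ℕ → Fin 2) (x : ℕ → Fin 2)
    (hx : ∀ n : ℕ, x n = (f (w (n / 5))).getD (n % 5) 0)
    (u v : List (Fin 2)) (hu : u ≠ []) (hv : v ≠ [])
    (huv : ∀ c : Fin 2, u.count c = v.count c)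
    (hpre : ∀ i : ℕ, ∀ h : i < (([0, 0, 0, 1] : List (Fin 2)) ++ u ++ v).length,
      (([0, 0, 0, 1] : List (Fin 2)) ++ u ++ v).get ⟨i, h⟩ = x i) :
    ∃ a b : List (Fin 2), a.length = b.length ∧
      ∀ i : ℕ, ∀ h : i < (([0] : List (Fin 2)) ++ a ++ [0] ++ b ++ [0]).length,
        (([0] : List (Fin 2)) ++ a ++ [0] ++ b ++ [0]).get ⟨i, h⟩ = w i := by
  set L := u.length with hLdef
  have hL1 : 0 < L := List.length_pos_iff.mpr hu
  have hvL : v.length = L := by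
    have h0 := huv 0; have h1 := huv 1
    have hcu := count01 u; have hcv := count01 v; omega
  -- w 0 = 0
  have hx1 : x 1 = 0 := by
    have h := hpre 1 (by simp)
    simpa using h.symm
  have hw0 : w 0 = 0 := by
    rcases fin2cases (w 0) with h | h
    · exact h
    · exfalso
      rw [hx 1] at hx1
      norm_num [h, hf1] at hx1
  -- counting function
  set N : ℕ → ℕ := fun n => ((List.range n).map x).count 1 with hNdef
  have hNstep : ∀ n, N (n+1) = N n + (if x n = 1 then 1 else 0) := by
    intro n
    simp [hNdef, List.range_succ, List.count_append, List.count_singleton']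
  have hNform : ∀ n, N n = 2*(n/5) + ((f (w (n/5))).take (n%5)).count 1 := by
    intro n
    induction n with
    | zero => simp [hNdef]
    | succ n ih =>
      have hxn : x n = (f (w (n/5))).getD (n%5) 0 := hx n
      have hr : n%5 = 0 ∨ n%5 = 1 ∨ n%5 = 2 ∨ n%5 = 3 ∨ n%5 = 4 := by omega
      have hs := hNstep n
      rcases fin2cases (w (n/5)) with hc | hc <;> rw [hc] at hxn ih
      · rw [hf0] at hxn ih
        rcases hr with h | h | h | h | h
        · have hd : (n+1)/5 = n/5 := by omega
          have hm : (n+1)%5 = 1 := by omega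
          rw [h] at ih hxn
          rw [hd, hm, hc, hf0]
          have hct : (List.take 1 ([0, 0, 0, 1, 1] : List (Fin 2))).count 1 = 0 := by decide
          have hct2 : (List.take 0 ([0, 0, 0, 1, 1] : List (Fin 2))).count 1 = 0 := by decide
          have helt : ([0, 0, 0, 1, 1] : List (Fin 2)).getD 0 0 = 0 := by decide
          rw [hct]
          rw [hct2] at ih
          rw [helt] at hxn
          rw [hxn] at hs
          norm_num at hs
          omega
        · have hd : (n+1)/5 = n/5 := by omega
          have hm : (n+1)%5 = 2 := by omega
          rw [h] at ih hxn
          rw [hd, hm, hc, hf0]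
          have hct : (List.take 2 ([0, 0, 0, 1, 1] : List (Fin 2))).count 1 = 0 := by decide
          have hct2 : (List.take 1 ([0, 0, 0, 1, 1] : List (Fin 2))).count 1 = 0 := by decide
          have helt : ([0, 0, 0, 1, 1] : List (Fin 2)).getD 1 0 = 0 := by decide
          rw [hct]
          rw [hct2] at ih
          rw [helt] at hxn
          rw [hxn] at hs
          norm_num at hs
          omega
        · have hd : (n+1)/5 = n/5 := by omega
          have hm : (n+1)%5 = 3 := by omega
          rw [h] at ih hxn
          rw [hd, hm, hc, hf0]
          have hct : (List.take 3 ([0, 0, 0, 1, 1] : List (Fin 2))).count 1 = 0 := by decide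
          have hct2 : (List.take 2 ([0, 0, 0, 1, 1] : List (Fin 2))).count 1 = 0 := by decide
          have helt : ([0, 0, 0, 1, 1] : List (Fin 2)).getD 2 0 = 0 := by decide
          rw [hct]
          rw [hct2] at ih
          rw [helt] at hxn
          rw [hxn] at hs
          norm_num at hs
          omega
        · have hd : (n+1)/5 = n/5 := by omega
          have hm : (n+1)%5 = 4 := by omega
          rw [h] at ih hxn
          rw [hd, hm, hc, hf0]
          have hct : (List.take 4 ([0, 0, 0, 1, 1] : List (Fin 2))).count 1 = 1 := by decide
          have hct2 : (List.take 3 ([0, 0, 0, 1, 1] : List (Fin 2))).count 1 = 0 := by decide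
          have helt : ([0, 0, 0, 1, 1] : List (Fin 2)).getD 3 0 = 1 := by decide
          rw [hct]
          rw [hct2] at ih
          rw [helt] at hxn
          rw [hxn] at hs
          norm_num at hs
          omega
        · have hd : (n+1)/5 = n/5 + 1 := by omega
          have hm : (n+1)%5 = 0 := by omega
          rw [h] at ih hxn
          rw [hd, hm]
          have hct2 : (List.take 4 ([0, 0, 0, 1, 1] : List (Fin 2))).count 1 = 1 := by decide
          rw [hct2] at ih
          have helt : ([0, 0, 0, 1, 1] : List (Fin 2)).getD 4 0 = 1 := by decide
          rw [helt] at hxn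
          rw [hxn] at hs
          norm_num at hs
          simp
          omega
      · rw [hf1] at hxn ih
        rcases hr with h | h | h | h | h
        · have hd : (n+1)/5 = n/5 := by omega
          have hm : (n+1)%5 = 1 := by omega
          rw [h] at ih hxn
          rw [hd, hm, hc, hf1]
          have hct : (List.take 1 ([0, 1, 1, 0, 0] : List (Fin 2))).count 1 = 0 := by decide
          have hct2 : (List.take 0 ([0, 1, 1, 0, 0] : List (Fin 2))).count 1 = 0 := by decide
          have helt : ([0, 1, 1, 0, 0] : List (Fin 2)).getD 0 0 = 0 := by decide
          rw [hct]
          rw [hct2] at ih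
          rw [helt] at hxn
          rw [hxn] at hs
          norm_num at hs
          omega
        · have hd : (n+1)/5 = n/5 := by omega
          have hm : (n+1)%5 = 2 := by omega
          rw [h] at ih hxn
          rw [hd, hm, hc, hf1]
          have hct : (List.take 2 ([0, 1, 1, 0, 0] : List (Fin 2))).count 1 = 1 := by decide
          have hct2 : (List.take 1 ([0, 1, 1, 0, 0] : List (Fin 2))).count 1 = 0 := by decide
          have helt : ([0, 1, 1, 0, 0] : List (Fin 2)).getD 1 0 = 1 := by decide
          rw [hct]
          rw [hct2] at ih
          rw [helt] at hxn
          rw [hxn] at hs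
          norm_num at hs
          omega
        · have hd : (n+1)/5 = n/5 := by omega
          have hm : (n+1)%5 = 3 := by omega
          rw [h] at ih hxn
          rw [hd, hm, hc, hf1]
          have hct : (List.take 3 ([0, 1, 1, 0, 0] : List (Fin 2))).count 1 = 2 := by decide
          have hct2 : (List.take 2 ([0, 1, 1, 0, 0] : List (Fin 2))).count 1 = 1 := by decide
          have helt : ([0, 1, 1, 0, 0] : List (Fin 2)).getD 2 0 = 1 := by decide
          rw [hct]
          rw [hct2] at ih
          rw [helt] at hxn
          rw [hxn] at hs
          norm_num at hs
          omega
        · have hd : (n+1)/5 = n/5 := by omega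
          have hm : (n+1)%5 = 4 := by omega
          rw [h] at ih hxn
          rw [hd, hm, hc, hf1]
          have hct : (List.take 4 ([0, 1, 1, 0, 0] : List (Fin 2))).count 1 = 2 := by decide
          have hct2 : (List.take 3 ([0, 1, 1, 0, 0] : List (Fin 2))).count 1 = 2 := by decide
          have helt : ([0, 1, 1, 0, 0] : List (Fin 2)).getD 3 0 = 0 := by decide
          rw [hct]
          rw [hct2] at ih
          rw [helt] at hxn
          rw [hxn] at hs
          norm_num at hs
          omega
        · have hd : (n+1)/5 = n/5 + 1 := by omega
          have hm : (n+1)%5 = 0 := by omega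
          rw [h] at ih hxn
          rw [hd, hm]
          have hct2 : (List.take 4 ([0, 1, 1, 0, 0] : List (Fin 2))).count 1 = 2 := by decide
          rw [hct2] at ih
          have helt : ([0, 1, 1, 0, 0] : List (Fin 2)).getD 4 0 = 0 := by decide
          rw [helt] at hxn
          rw [hxn] at hs
          norm_num at hs
          simp
          omega

  -- identify the prefix with x
  have hPeq : (([0,0,0,1] : List (Fin 2)) ++ u ++ v) = (List.range (4+2*L)).map x := by
    apply List.ext_get
    · simp only [List.length_append, List.length_cons, List.length_nil,
        List.length_map, List.length_range]
      omega
    · intro i h1 h2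
      rw [hpre i h1]
      simp
  have hc4 : (([0,0,0,1] : List (Fin 2))).count 1 = 1 := by decide
  have ht : ((List.range (4+2*L)).map x).take (4+L) = (List.range (4+L)).map x := by
    have hmin : (4+L) ⊓ (4+2*L) = 4+L := min_eq_left (by omega)
    rw [← List.map_take, List.take_range, hmin]
  have h2len : (([0,0,0,1] : List (Fin 2)) ++ u).length = 4 + L := by simp; omega
  have h4 : (List.range (4+L)).map x = ([0,0,0,1] : List (Fin 2)) ++ u := by
    rw [← ht, ← hPeq, ← h2len, List.take_left]
  have hNA : N (4+L) = 1 + u.count 1 := by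
    have hh : N (4+L) = (((List.range (4+L)).map x)).count 1 := rfl
    rw [hh, h4, List.count_append, hc4]
  have hNB : N (4+2*L) = 1 + u.count 1 + v.count 1 := by
    have hh : N (4+2*L) = (((List.range (4+2*L)).map x)).count 1 := rfl
    rw [hh, ← hPeq, List.count_append, List.count_append, hc4]
  have key : 2 * N (4+L) = N (4+2*L) + 1 := by
    have h1 := huv 1
    omega
  -- arithmetic
  have tc : ∀ (c : Fin 2) (r : ℕ), r < 5 →
      ((f c).take r).count 1 = if c = 0 then r/4 else 2*r/3 := by
    intro c r hr
    rcases fin2cases c with h | h <;> subst h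
    · rw [hf0]
      simp only [if_pos rfl]
      interval_cases r <;> decide
    · rw [hf1, if_neg (by decide : ¬ (1 : Fin 2) = 0)]
      interval_cases r <;> decide
  have e1 := hNform (4+L)
  have e2 := hNform (4+2*L)
  set a := (4+L)/5 with ha5
  set p := (4+L)%5 with hp5
  set b := (4+2*L)/5 with hb5
  set q := (4+2*L)%5 with hq5
  have hp : p < 5 := by omega
  have hq : q < 5 := by omega
  rw [tc (w a) p hp] at e1
  rw [tc (w b) q hq] at e2
  have hne : ¬ ((1 : Fin 2) = 0) := by decide
  rcases fin2cases (w a) with hwa | hwa <;> rcases fin2cases (w b) with hwb | hwb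
  · -- good case
    rw [hwa, if_pos rfl] at e1
    rw [hwb, if_pos rfl] at e2
    have hLc : 4 + 2*L = 2*(4+L) - 4 := by omega
    rw [hLc] at e2 hb5 hq5
    have hab : b = 2 * a ∧ 1 ≤ a :=
      arith00 (4+L) _ _ a p b q e1 e2 (by rw [← hLc]; exact key) ha5 hp5 hb5 hq5 (by omega)
    obtain ⟨hb2, ha1⟩ := hab
    have hw2a : w (2*a) = 0 := by rw [← hb2]; exact hwb
    have hbig : (([0] : List (Fin 2)) ++ (List.range' 1 (a-1)).map w ++ [0] ++
        (List.range' (a+1) (a-1)).map w ++ [0]) = (List.range' 0 (2*a+1)).map w := by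
      rw [show List.range' 0 (2*a+1) = List.range' 0 (a+1) ++ List.range' (a+1) a from by
            have h := range'_split 0 (a+1) a (2*a+1) (by omega)
            rw [Nat.zero_add] at h; exact h]
      rw [show List.range' 0 (a+1) = List.range' 0 a ++ List.range' a 1 from by
            have h := range'_split 0 a 1 (a+1) rfl
            rw [Nat.zero_add] at h; exact h]
      rw [show List.range' 0 a = List.range' 0 1 ++ List.range' 1 (a-1) from by
            have h := range'_split 0 1 (a-1) a (by omega)
            rw [Nat.zero_add] at h; exact h]
      rw [show List.range' (a+1) a = List.range' (a+1) (a-1) ++ List.range' (2*a) 1 from by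
            have h := range'_split (a+1) (a-1) 1 a (by omega)
            rw [show a+1+(a-1) = 2*a from by omega] at h; exact h]
      simp [List.range'_one, hw0, hwa, hw2a]
    refine ⟨(List.range' 1 (a-1)).map w, (List.range' (a+1) (a-1)).map w, by simp, ?_⟩
    rw [hbig]
    intro i hi
    simp [List.get_eq_getElem, List.getElem_map, List.getElem_range']
  · rw [hwa, if_pos rfl] at e1
    rw [hwb, if_neg hne] at e2
    have hLc : 4 + 2*L = 2*(4+L) - 4 := by omega
    rw [hLc] at e2 hb5 hq5
    exact (arith01 (4+L) _ _ a p b q e1 e2 (by rw [← hLc]; exact key) ha5 hp5 hb5 hq5 (by omega)).elim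
  · rw [hwa, if_neg hne] at e1
    rw [hwb, if_pos rfl] at e2
    have hLc : 4 + 2*L = 2*(4+L) - 4 := by omega
    rw [hLc] at e2 hb5 hq5
    exact (arith10 (4+L) _ _ a p b q e1 e2 (by rw [← hLc]; exact key) ha5 hp5 hb5 hq5 (by omega)).elim
  · rw [hwa, if_neg hne] at e1
    rw [hwb, if_neg hne] at e2
    have hLc : 4 + 2*L = 2*(4+L) - 4 := by omega
    rw [hLc] at e2 hb5 hq5
    exact (arith11 (4+L) _ _ a p b q e1 e2 (by rw [← hLc]; exact key) ha5 hp5 hb5 hq5 (by omega)).elim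
end

section
/- Let h be the morphism 0 ↦ 01011111, 1 ↦ 11101111 and w its fixed point starting with 0. Then w has no prefix of the form 0x0y0 with |x| = |y|. -/
/-- Let `h` be the morphism `0 ↦ 01011111`, `1 ↦ 11101111` and `w` its fixed point
starting with `0` (every iterate `h^[m] 0` is a prefix of `w`). Then `w` has no prefix of
the form `0 ++ x ++ 0 ++ y ++ 0` with `|x| = |y|`. -/
theorem stmt_17 (h : Fin 2 → List (Fin 2))
    (hh0 : h 0 = [0, 1, 0, 1, 1, 1, 1, 1]) (hh1 : h 1 = [1, 1, 1, 0, 1, 1, 1, 1])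
    (w : ℕ → Fin 2)
    (hw : ∀ m : ℕ, ∀ i : ℕ, ∀ hi : i < ((fun l => l.flatMap h)^[m] [0]).length,
      w i = ((fun l => l.flatMap h)^[m] [0]).get ⟨i, hi⟩) :
    ¬ ∃ x y : List (Fin 2), x.length = y.length ∧
      ∀ i : ℕ, ∀ hi : i < (([0] : List (Fin 2)) ++ x ++ [0] ++ y ++ [0]).length,
        (([0] : List (Fin 2)) ++ x ++ [0] ++ y ++ [0]).get ⟨i, hi⟩ = w i := by
  have two : ∀ v : Fin 2, v = 0 ∨ v = 1 := by decide
  have hlen : ∀ a : Fin 2, (h a).length = 8 := by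
    intro a; rcases two a with rfl | rfl <;> simp [hh0, hh1]
  set L : ℕ → List (Fin 2) := fun m => (fun l => l.flatMap h)^[m] [0] with hL
  have lbind : ∀ l : List (Fin 2), (l.flatMap h).length = 8 * l.length := by
    intro l; induction l with
    | nil => rfl
    | cons a t ih =>
      have e : (a :: t).flatMap h = h a ++ t.flatMap h := rfl
      rw [e, List.length_append, ih, hlen, List.length_cons]; ring
  have gbind : ∀ (l : List (Fin 2)) (n r : ℕ), r < 8 →
      (l.flatMap h)[8*n+r]? = (l[n]?.bind fun a => (h a)[r]?) := by
    intro l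
    induction l with
    | nil => intro n r _; simp
    | cons a t ih =>
      intro n r hr
      have e : (a :: t).flatMap h = h a ++ t.flatMap h := rfl
      rw [e]
      cases n with
      | zero =>
        have h1 : 8*0+r < (h a).length := by rw [hlen]; omega
        rw [List.getElem?_append_left h1]
        simp
      | succ n =>
        have h1 : (h a).length ≤ 8*(n+1)+r := by rw [hlen]; omega
        rw [List.getElem?_append_right h1]
        have h2 : 8*(n+1)+r - (h a).length = 8*n+r := by rw [hlen]; omega
        rw [h2, ih n r hr]
        simp
  have Llen : ∀ m, (L m).length = 8 ^ m := by
    intro m; induction m with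
    | zero => simp [hL]
    | succ m ih =>
      have e : L (m+1) = (L m).flatMap h := by
        simp only [hL, Function.iterate_succ_apply']
      rw [e, lbind, ih, pow_succ]; ring
  have hw' : ∀ m i, i < (L m).length → (L m)[i]? = some (w i) := by
    intro m i hi
    rw [List.getElem?_eq_getElem hi, hw m i hi]
    simp; rfl
  -- key recurrence
  have wrec : ∀ n r : ℕ, r < 8 → (h (w n))[r]? = some (w (8*n+r)) := by
    intro n r hr
    have hn : n < (L n).length := by rw [Llen]; exact Nat.lt_pow_self (n := n) (by norm_num)
    have hi : 8*n+r < (L (n+1)).length := by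
      rw [Llen, pow_succ]
      have := Nat.lt_pow_self (n := n) (show 1 < 8 by norm_num)
      omega
    have e1 : L (n+1) = (L n).flatMap h := by
      simp only [hL, Function.iterate_succ_apply']
    have e2 := hw' (n+1) (8*n+r) hi
    rw [e1, gbind (L n) n r hr, hw' n n hn] at e2
    simpa using e2
  -- main claim: no a ≥ 1 with w a = 0 and w (2a) = 0
  have key : ∀ a : ℕ, 1 ≤ a → w a = 0 → w (2*a) = 0 → False := by
    intro a
    induction a using Nat.strong_induction_on with
    | _ a ih =>
      intro ha h1 h2
      obtain ⟨q, r, hr, rfl⟩ : ∃ q r, r < 8 ∧ a = 8*q + r :=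
        ⟨a/8, a%8, Nat.mod_lt _ (by norm_num), by omega⟩
      have e1 := wrec q r hr
      rw [h1] at e1
      rcases two (w q) with hq | hq <;> rw [hq] at e1
      · rw [hh0] at e1
        interval_cases r
        · -- r = 0 : a = 8q, descend
          have e2 := wrec (2*q) 0 (by norm_num)
          have h2' : w (8*(2*q)+0) = 0 := by
            have e : 8*(2*q)+0 = 2*(8*q+0) := by ring
            rw [e]; exact h2
          rw [h2'] at e2
          rcases two (w (2*q)) with hq2 | hq2 <;> rw [hq2] at e2
          · exact ih q (by omega) (by omega) hq hq2
          · rw [hh1] at e2; exact absurd e2 (by decide)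
        · exact absurd e1 (by decide)
        · -- r = 2 : 2a = 16q+4
          have e2 := wrec (2*q) 4 (by norm_num)
          have h2' : w (8*(2*q)+4) = 0 := by
            have e : 8*(2*q)+4 = 2*(8*q+2) := by ring
            rw [e]; exact h2
          rw [h2'] at e2
          rcases two (w (2*q)) with hq2 | hq2 <;> rw [hq2] at e2
          · rw [hh0] at e2; exact absurd e2 (by decide)
          · rw [hh1] at e2; exact absurd e2 (by decide)
        all_goals exact absurd e1 (by decide)
      · rw [hh1] at e1
        interval_cases r
        · exact absurd e1 (by decide)
        · exact absurd e1 (by decide)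
        · exact absurd e1 (by decide)
        · -- r = 3 : 2a = 16q+6
          have e2 := wrec (2*q) 6 (by norm_num)
          have h2' : w (8*(2*q)+6) = 0 := by
            have e : 8*(2*q)+6 = 2*(8*q+3) := by ring
            rw [e]; exact h2
          rw [h2'] at e2
          rcases two (w (2*q)) with hq2 | hq2 <;> rw [hq2] at e2
          · rw [hh0] at e2; exact absurd e2 (by decide)
          · rw [hh1] at e2; exact absurd e2 (by decide)
        all_goals exact absurd e1 (by decide)
  -- now extract the three zeros from the prefix hypothesis
  rintro ⟨x, y, hxy, hpre⟩
  set p : List (Fin 2) := ([0] : List (Fin 2)) ++ x ++ [0] ++ y ++ [0] with hp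
  set k := x.length with hk
  have hplen : p.length = 2*k + 3 := by simp [hp, ← hxy]; omega
  have hpg : ∀ i (hi : i < p.length), p[i]? = some (w i) := by
    intro i hi
    rw [List.getElem?_eq_getElem hi, ← hpre i hi]
    simp
  have hw1 : w (k+1) = 0 := by
    have h0 : k + 1 < p.length := by omega
    have hh := hpg (k+1) h0
    have hp1 : p[k+1]? = some 0 := by
      have hsplit : p = (0 :: x) ++ (0 :: (y ++ [0])) := by simp [hp]
      rw [hsplit, List.getElem?_append_right (by simp [hk])]
      simp [hk]
    rw [hp1] at hh; exact (Option.some.inj hh).symm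
  have hw2 : w (2*k+2) = 0 := by
    have h0 : 2*k + 2 < p.length := by omega
    have hh := hpg (2*k+2) h0
    have hp2 : p[2*k+2]? = some 0 := by
      have hsplit : p = (0 :: (x ++ (0 :: y))) ++ [0] := by simp [hp]
      rw [hsplit, List.getElem?_append_right (by simp [hk, ← hxy]; omega)]
      have e : 2*k+2 - (0 :: (x ++ (0 :: y))).length = 0 := by simp [hk, ← hxy]; omega
      rw [e]; rfl
    rw [hp2] at hh; exact (Option.some.inj hh).symm
  have e : 2*(k+1) = 2*k+2 := by ring
  exact key (k+1) (by omega) hw1 (by rw [e]; exact hw2)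
end

section
/- Fix M ≥ 1 and define the periodic integer sequence v by v(n) = 2^(n mod M) if n mod M ≠ M-1, and v(n) = 1 - 2^(M-1) if n mod M = M-1. Then for all i ≤ j and i' ≤ j', if the sums v(i) + ... + v(j-1) and v(i') + ... + v(j'-1) are equal, then j - i ≡ j' - i' (mod M). -/
lemma pow2_add_aux : ∀ N a b c d : ℕ, a + b + c + d ≤ N →
    2 ^ a + 2 ^ b = 2 ^ c + 2 ^ d → a + b = c + d := by
  intro N
  induction N with
  | zero => intro a b c d hle h; omega
  | succ N ih =>
    intro a b c d hle h
    have inj : ∀ x y : ℕ, (2:ℕ) ^ x = 2 ^ y → x = y :=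
      fun x y hxy => Nat.pow_right_injective (le_refl 2) hxy
    have dv : ∀ x : ℕ, x ≠ 0 → (2:ℕ) ∣ 2 ^ x := fun x hx => dvd_pow_self 2 hx
    rcases Nat.eq_zero_or_pos a with ha | ha <;>
    rcases Nat.eq_zero_or_pos b with hb | hb <;>
    rcases Nat.eq_zero_or_pos c with hc | hc <;>
    rcases Nat.eq_zero_or_pos d with hd | hd
    · omega
    · -- a=0,b=0,c=0,d>0
      subst ha; subst hb; subst hc
      have := dv d (by omega); simp only [pow_zero] at h; omega
    · subst ha; subst hb; subst hd
      have := dv c (by omega); simp only [pow_zero] at h; omega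
    · subst ha; subst hb
      have h1 := dv c (by omega); have h2 := dv d (by omega)
      have hc1 : 1 < 2 ^ c := Nat.one_lt_two_pow_iff.mpr (by omega)
      have hd1 : 1 < 2 ^ d := Nat.one_lt_two_pow_iff.mpr (by omega)
      simp only [pow_zero] at h; omega
    · subst ha; subst hc; subst hd
      have := dv b (by omega)
      have hb1 : 1 < 2 ^ b := Nat.one_lt_two_pow_iff.mpr (by omega)
      simp only [pow_zero] at h; omega
    · subst ha; subst hc
      have := inj b d (by simp only [pow_zero] at h; omega); omega
    · subst ha; subst hd
      have := inj b c (by simp only [pow_zero] at h; omega); omega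
    · subst ha
      have h1 := dv b (by omega); have h2 := dv c (by omega); have h3 := dv d (by omega)
      simp only [pow_zero] at h; omega
    · subst hb; subst hc; subst hd
      have := dv a (by omega)
      have ha1 : 1 < 2 ^ a := Nat.one_lt_two_pow_iff.mpr (by omega)
      simp only [pow_zero] at h; omega
    · subst hb; subst hc
      have := inj a d (by simp only [pow_zero] at h; omega); omega
    · subst hb; subst hd
      have := inj a c (by simp only [pow_zero] at h; omega); omega
    · subst hb
      have h1 := dv a (by omega); have h2 := dv c (by omega); have h3 := dv d (by omega)
      simp only [pow_zero] at h; omega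
    · subst hc; subst hd
      have h1 : 1 < 2 ^ a := Nat.one_lt_two_pow_iff.mpr (by omega)
      have h2 : 1 < 2 ^ b := Nat.one_lt_two_pow_iff.mpr (by omega)
      have h3 := dv a (by omega); have h4 := dv b (by omega)
      simp only [pow_zero] at h; omega
    · subst hc
      have h1 := dv a (by omega); have h2 := dv b (by omega); have h3 := dv d (by omega)
      simp only [pow_zero] at h; omega
    · subst hd
      have h1 := dv a (by omega); have h2 := dv b (by omega); have h3 := dv c (by omega)
      simp only [pow_zero] at h; omega
    · -- all positive: divide by 2
      obtain ⟨a', rfl⟩ : ∃ a', a = a' + 1 := ⟨a - 1, by omega⟩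
      obtain ⟨b', rfl⟩ : ∃ b', b = b' + 1 := ⟨b - 1, by omega⟩
      obtain ⟨c', rfl⟩ : ∃ c', c = c' + 1 := ⟨c - 1, by omega⟩
      obtain ⟨d', rfl⟩ : ∃ d', d = d' + 1 := ⟨d - 1, by omega⟩
      have h' : 2 ^ a' + 2 ^ b' = 2 ^ c' + 2 ^ d' := by
        have : 2 * (2 ^ a' + 2 ^ b') = 2 * (2 ^ c' + 2 ^ d') := by
          simpa [pow_succ, mul_comm, mul_add] using h
        omega
      have := ih a' b' c' d' (by omega) h'
      omega

lemma pow2_add_int (a b c d : ℕ) (h : (2:ℤ) ^ a + 2 ^ b = 2 ^ c + 2 ^ d) :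
    a + b = c + d := by
  have h' : (2:ℕ) ^ a + 2 ^ b = 2 ^ c + 2 ^ d := by exact_mod_cast h
  exact pow2_add_aux (a + b + c + d) a b c d le_rfl h'

/-- For `M ≥ 1` and the `M`-periodic sequence `v(n) = 2^(n mod M)` if `n mod M ≠ M - 1`
and `v(n) = 1 - 2^(M-1)` otherwise: if two sums of consecutive terms of `v` are equal,
then the lengths of the two ranges are congruent mod `M`. -/
theorem stmt_18 (M : ℕ) (hM : 1 ≤ M) (v : ℕ → ℤ)
    (hv : ∀ n : ℕ, v n = if n % M = M - 1 then 1 - 2 ^ (M - 1) else 2 ^ (n % M))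
    (i j i' j' : ℕ) (hij : i ≤ j) (hij' : i' ≤ j')
    (hsum : (∑ n ∈ Finset.Ico i j, v n) = ∑ n ∈ Finset.Ico i' j', v n) :
    Nat.ModEq M (j - i) (j' - i') := by
  have hS : ∀ k : ℕ, (∑ n ∈ Finset.range k, v n) = 2 ^ (k % M) - 1 := by
    intro k
    induction k with
    | zero => simp [Nat.zero_mod]
    | succ k ihk =>
      rw [Finset.sum_range_succ, ihk, hv k]
      by_cases hk : k % M = M - 1
      · have hk1 : (k + 1) % M = 0 := by
          rw [Nat.add_mod, hk]
          simp [show M - 1 + 1 = M by omega]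
        rw [if_pos hk, hk1, hk]
        ring
      · have hlt : k % M < M := Nat.mod_lt k (by omega)
        have hM2 : 2 ≤ M := by omega
        have hk1 : (k + 1) % M = k % M + 1 := by
          rw [Nat.add_mod, Nat.mod_eq_of_lt (show (1:ℕ) < M by omega),
            Nat.mod_eq_of_lt (by omega)]
        rw [if_neg hk, hk1, pow_succ]
        ring
  rw [Finset.sum_Ico_eq_sub v hij, Finset.sum_Ico_eq_sub v hij', hS, hS, hS, hS] at hsum
  have key : (2:ℤ) ^ (j % M) + 2 ^ (i' % M) = 2 ^ (j' % M) + 2 ^ (i % M) := by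
    linarith
  have h1 : j % M + i' % M = j' % M + i % M := pow2_add_int _ _ _ _ key
  have h2 : (j + i') ≡ (j' + i) [MOD M] := by
    calc j + i' ≡ j % M + i' % M [MOD M] :=
          ((Nat.mod_modEq j M).add (Nat.mod_modEq i' M)).symm
      _ = j' % M + i % M := h1
      _ ≡ j' + i [MOD M] := (Nat.mod_modEq j' M).add (Nat.mod_modEq i M)
  have h3 : (j - i) + (i + i') = j + i' := by omega
  have h4 : (j' - i') + (i + i') = j' + i := by omega
  have h5 : (j - i) + (i + i') ≡ (j' - i') + (i + i') [MOD M] := by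
    rw [h3, h4]; exact h2
  exact Nat.ModEq.add_right_cancel' (i + i') h5
end

section
/- Let M ≥ 1, let v be the M-periodic sequence v(n) = 2^(n mod M) for n mod M ≠ M-1 and v(n) = 1 - 2^(M-1) otherwise, let u : ℕ → {0,1} be any sequence, and define w(n) = u(n)·2^M + v(n). If i ≤ j ≤ k and the sums w(i)+...+w(j-1) and w(j)+...+w(k-1) are equal, then j - i ≡ k - j (mod M) and u(i)+...+u(j-1) = u(j)+...+u(k-1). -/
lemma aux_pow_le {a c b : ℕ} (hac : a ≤ c) (h : 2^a + 2^c = 2^(b+1)) : a = c := by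
  obtain ⟨d, rfl⟩ := Nat.exists_eq_add_of_le hac
  rcases Nat.eq_zero_or_pos d with rfl | hd
  · simp
  exfalso
  have h1 : 2^a * (1 + 2^d) = 2^(b+1) := by
    rw [mul_add, mul_one, ← pow_add]; exact h
  have h2 : (1 + 2^d) ∣ 2^(b+1) := ⟨2^a, by rw [← h1]; ring⟩
  obtain ⟨e, he1, he2⟩ := (Nat.dvd_prime_pow Nat.prime_two).mp h2
  have hd2 : 2 ∣ 2^d := dvd_pow_self 2 (by omega)
  rcases Nat.eq_zero_or_pos e with rfl | he
  · have hle : (1:ℕ) ≤ 2^d := Nat.one_le_two_pow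
    omega
  · have hE : 2 ∣ 2^e := dvd_pow_self 2 (by omega)
    omega

lemma aux_pow {a c b : ℕ} (h : 2^a + 2^c = 2^(b+1)) : a = c := by
  rcases le_total a c with hac | hca
  · exact aux_pow_le hac h
  · exact (aux_pow_le hca (by rw [add_comm]; exact h)).symm

lemma vsum (M : ℕ) (hM : 1 ≤ M) (v : ℕ → ℤ)
    (hv : ∀ n : ℕ, v n = if n % M = M - 1 then 1 - 2 ^ (M - 1) else 2 ^ (n % M))
    (i : ℕ) : ∑ n ∈ Finset.range i, v n = 2 ^ (i % M) - 1 := by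
  induction i with
  | zero => simp
  | succ i ih =>
    rw [Finset.sum_range_succ, ih, hv]
    have hmod : (i % M + 1) % M = (i + 1) % M := Nat.mod_add_mod i M 1
    by_cases h : i % M = M - 1
    · rw [if_pos h]
      have h1 : (i + 1) % M = 0 := by
        rw [← hmod, h]
        have : M - 1 + 1 = M := by omega
        rw [this, Nat.mod_self]
      rw [h1, h]
      ring
    · rw [if_neg h]
      have hlt : i % M < M := Nat.mod_lt _ (by omega)
      have h1 : (i + 1) % M = i % M + 1 := by
        rw [← hmod, Nat.mod_eq_of_lt (by omega)]
      rw [h1, pow_succ]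
      ring

/-- For `M ≥ 1`, `v` the `M`-periodic sequence as above, `u : ℕ → {0,1}` arbitrary, and
`w(n) = u(n)·2^M + v(n)`: if `i ≤ j ≤ k` and the sums `w(i)+⋯+w(j-1)` and
`w(j)+⋯+w(k-1)` are equal, then `j - i ≡ k - j (mod M)` and
`u(i)+⋯+u(j-1) = u(j)+⋯+u(k-1)`. -/
theorem stmt_19 (M : ℕ) (hM : 1 ≤ M) (v : ℕ → ℤ)
    (hv : ∀ n : ℕ, v n = if n % M = M - 1 then 1 - 2 ^ (M - 1) else 2 ^ (n % M))
    (u : ℕ → ℤ) (hu : ∀ n : ℕ, u n = 0 ∨ u n = 1)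
    (w : ℕ → ℤ) (hw : ∀ n : ℕ, w n = u n * 2 ^ M + v n)
    (i j k : ℕ) (hij : i ≤ j) (hjk : j ≤ k)
    (hsum : (∑ n ∈ Finset.Ico i j, w n) = ∑ n ∈ Finset.Ico j k, w n) :
    Nat.ModEq M (j - i) (k - j) ∧
      (∑ n ∈ Finset.Ico i j, u n) = ∑ n ∈ Finset.Ico j k, u n := by
  have hIco : ∀ p q : ℕ, p ≤ q →
      ∑ n ∈ Finset.Ico p q, v n = 2 ^ (q % M) - 2 ^ (p % M) := by
    intro p q hpq
    rw [Finset.sum_Ico_eq_sub _ hpq, vsum M hM v hv, vsum M hM v hv]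
    ring
  have hwsum : ∀ p q : ℕ, p ≤ q →
      ∑ n ∈ Finset.Ico p q, w n
        = (∑ n ∈ Finset.Ico p q, u n) * 2 ^ M + (2 ^ (q % M) - 2 ^ (p % M)) := by
    intro p q hpq
    calc ∑ n ∈ Finset.Ico p q, w n
        = ∑ n ∈ Finset.Ico p q, (u n * 2 ^ M + v n) :=
          Finset.sum_congr rfl fun n _ => hw n
      _ = (∑ n ∈ Finset.Ico p q, u n) * 2 ^ M + (2 ^ (q % M) - 2 ^ (p % M)) := by
          rw [Finset.sum_add_distrib, ← Finset.sum_mul, hIco p q hpq]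
  rw [hwsum i j hij, hwsum j k hjk] at hsum
  set A := ∑ n ∈ Finset.Ico i j, u n with hA
  set B := ∑ n ∈ Finset.Ico j k, u n with hB
  set a := i % M with ha
  set b := j % M with hb
  set c := k % M with hc
  have hbound : ∀ r : ℕ, r < M → (1:ℤ) ≤ 2 ^ r ∧ (2:ℤ) ^ r ≤ 2 ^ (M-1) := by
    intro r hr
    constructor
    · exact_mod_cast Nat.one_le_two_pow
    · exact pow_le_pow_right₀ (by norm_num) (by omega)
  have haM := hbound a (Nat.mod_lt _ (by omega))
  have hbM := hbound b (Nat.mod_lt _ (by omega))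
  have hcM := hbound c (Nat.mod_lt _ (by omega))
  have hpowM : (2:ℤ) ^ M = 2 * 2 ^ (M - 1) := by
    rw [← pow_succ']
    congr 1
    omega
  have hABeq : A = B := by
    by_contra hne
    have h1 : A - B ≥ 1 ∨ A - B ≤ -1 := by omega
    have hEq : (A - B) * 2 ^ M = (2 ^ c - 2 ^ b) - (2 ^ b - 2 ^ a) := by linarith
    rcases h1 with h1 | h1 <;>
      nlinarith [haM.1, haM.2, hbM.1, hbM.2, hcM.1, hcM.2]
  have hE : (2:ℤ) ^ a + 2 ^ c = 2 ^ (b + 1) := by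
    rw [hABeq] at hsum
    rw [pow_succ]
    linarith
  have hNat : 2 ^ a + 2 ^ c = 2 ^ (b + 1) := by exact_mod_cast hE
  have hac : a = c := aux_pow hNat
  have hab : a = b := by
    have h' := hNat
    rw [← hac, pow_succ] at h'
    have hpow : (2:ℕ) ^ a = 2 ^ b := by omega
    exact Nat.pow_right_injective (le_refl 2) hpow
  have d1 : M ∣ j - i := (Nat.modEq_iff_dvd' hij).mp (by rw [Nat.ModEq, ← ha, ← hb, hab])
  have d2 : M ∣ k - j := (Nat.modEq_iff_dvd' hjk).mp (by rw [Nat.ModEq, ← hb, ← hc, ← hab, hac])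
  exact ⟨(Nat.modEq_zero_iff_dvd.mpr d1).trans (Nat.modEq_zero_iff_dvd.mpr d2).symm, hABeq⟩
end
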